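/- arXiv:0812.0195 — 3 statements merged into one kernel-verified Lean document; each statement's English description precedes it below -/
import Mathlib

section
/- Let A = (v_1, …, v_q) ⊂ ℤ^n be a homogeneous normal configuration and let I_A ⊂ K[T_1, …, T_q] be its toric ideal. Then the following are equivalent: (a) I_A is generated by a finite set of circuits of I_A; (b) I_A is generated by a finite set of circuits of I_A each having a square-free term; (c) every unbalanced circuit of I_A has a connector which is a K[T_1, …, T_q]-linear combination of circuits of I_A having a square-free term. -/
open MvPolynomial

/-- The binomial `T^a - T^b` in `K[T_1,…,T_q]`. -/
noncomputable def binom (K : Type*) [Field K] {q : ℕ} (a b : Fin q → ℕ) :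
    MvPolynomial (Fin q) K :=
  monomial (Finsupp.equivFunOnFinite.symm a) 1 -
    monomial (Finsupp.equivFunOnFinite.symm b) 1

/-- The toric ideal of the configuration `v`. -/
noncomputable def toricIdeal (K : Type*) [Field K] {n q : ℕ} (v : Fin q → Fin n → ℤ) :
    Ideal (MvPolynomial (Fin q) K) :=
  Ideal.span { f | ∃ a b : Fin q → ℕ,
    (∑ i, a i • v i) = (∑ i, b i • v i) ∧ f = binom K a b }

/-- `α` is a circuit of the configuration `v`. -/
def IsCircuitVec {n q : ℕ} (v : Fin q → Fin n → ℤ) (α : Fin q → ℤ) : Prop :=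
  α ≠ 0 ∧ (∑ i, α i • v i) = 0 ∧
    (∀ β : Fin q → ℚ, (∑ i, β i • (fun l => (v i l : ℚ))) = 0 → β ≠ 0 →
      Function.support β ⊆ Function.support α →
      Function.support β = Function.support α) ∧
    Finset.univ.gcd α = 1

def posExp {q : ℕ} (α : Fin q → ℤ) : Fin q → ℕ := fun i => (α i).toNat

def negExp {q : ℕ} (α : Fin q → ℤ) : Fin q → ℕ := fun i => (-(α i)).toNat

/-- The binomial `T^a - T^b` has a square-free term. -/
def SqFreePair {q : ℕ} (a b : Fin q → ℕ) : Prop :=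
  (∀ i, a i ≤ 1) ∨ (∀ i, b i ≤ 1)

/-- `f` is a circuit of the toric ideal of `v`. -/
def IsCircuitPoly (K : Type*) [Field K] {n q : ℕ} (v : Fin q → Fin n → ℤ)
    (f : MvPolynomial (Fin q) K) : Prop :=
  ∃ α : Fin q → ℤ, IsCircuitVec v α ∧ f = binom K (posExp α) (negExp α)

/-- `f` is a circuit of the toric ideal of `v` having a square-free term. -/
def IsSqFreeCircuitPoly (K : Type*) [Field K] {n q : ℕ} (v : Fin q → Fin n → ℤ)
    (f : MvPolynomial (Fin q) K) : Prop :=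
  ∃ α : Fin q → ℤ, IsCircuitVec v α ∧ f = binom K (posExp α) (negExp α) ∧
    SqFreePair (posExp α) (negExp α)

/-- The configuration lies on an affine hyperplane off the origin. -/
def IsHomogeneousConfig {n q : ℕ} (v : Fin q → Fin n → ℤ) : Prop :=
  ∃ w : Fin n → ℝ, ∀ i, (∑ l, w l * (v i l : ℝ)) = 1

/-- `ℕA = ℤA ∩ ℝ₊A`. -/
def IsNormalConfig {n q : ℕ} (v : Fin q → Fin n → ℤ) : Prop :=
  ∀ x : Fin n → ℤ,
    x ∈ AddSubmonoid.closure (Set.range v) ↔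
      (x ∈ AddSubgroup.closure (Set.range v) ∧
        ∃ c : Fin q → ℝ, (∀ i, 0 ≤ c i) ∧ ∀ l, (x l : ℝ) = ∑ i, c i * (v i l : ℝ))

/-- The toric ideal is generated by a finite set of circuits. -/
def GenByCircuits (K : Type*) [Field K] {n q : ℕ} (v : Fin q → Fin n → ℤ) : Prop :=
  ∃ S : Finset (MvPolynomial (Fin q) K),
    (∀ f ∈ S, IsCircuitPoly K v f) ∧
      Ideal.span (S : Set (MvPolynomial (Fin q) K)) = toricIdeal K v

/-- The toric ideal is generated by a finite set of circuits with a square-free term. -/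
def GenBySqFreeCircuits (K : Type*) [Field K] {n q : ℕ} (v : Fin q → Fin n → ℤ) : Prop :=
  ∃ S : Finset (MvPolynomial (Fin q) K),
    (∀ f ∈ S, IsSqFreeCircuitPoly K v f) ∧
      Ideal.span (S : Set (MvPolynomial (Fin q) K)) = toricIdeal K v

/-- `f` is a connector of the unbalanced binomial `T^a - T^b`, where `a` is the term
with the smaller maximal exponent and `b` the one with the larger maximal exponent. -/
def IsConnector (K : Type*) [Field K] {n q : ℕ} (v : Fin q → Fin n → ℤ)
    (a b : Fin q → ℕ) (f : MvPolynomial (Fin q) K) : Prop :=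
  ∃ c d : Fin q → ℕ, f = binom K c d ∧ f ∈ toricIdeal K v ∧
    (∀ i, c i ≤ 1) ∧ (∀ i, c i ≠ 0 → a i ≠ 0) ∧ (∃ i, d i ≠ 0 ∧ b i ≠ 0)

/-- Every unbalanced circuit of the toric ideal has a connector which is a
`K[T]`-linear combination of circuits with a square-free term. -/
def ConnectorCondition (K : Type*) [Field K] {n q : ℕ} (v : Fin q → Fin n → ℤ) : Prop :=
  ∀ α : Fin q → ℤ, IsCircuitVec v α →
    Finset.univ.sup (posExp α) < Finset.univ.sup (negExp α) →
    ∃ f : MvPolynomial (Fin q) K, IsConnector K v (posExp α) (negExp α) f ∧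
      f ∈ Ideal.span { g : MvPolynomial (Fin q) K | IsSqFreeCircuitPoly K v g }
namespace Toric

variable {K : Type*} [Field K] {n q : ℕ}

/-- the monomial with exponent (function) a -/
noncomputable def X (K : Type*) [Field K] {q : ℕ} (a : Fin q → ℕ) : MvPolynomial (Fin q) K :=
  monomial (Finsupp.equivFunOnFinite.symm a) 1

lemma binom_eq (a b : Fin q → ℕ) : binom K a b = X K a - X K b := rfl

lemma symm_add (a b : Fin q → ℕ) :
    Finsupp.equivFunOnFinite.symm (a + b) =
      Finsupp.equivFunOnFinite.symm a + Finsupp.equivFunOnFinite.symm b := by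
  ext i; simp

lemma X_mul (a b : Fin q → ℕ) : X K a * X K b = X K (a + b) := by
  simp [X, monomial_mul, symm_add]

lemma X_mul_binom (e a b : Fin q → ℕ) :
    X K e * binom K a b = binom K (e + a) (e + b) := by
  simp [binom_eq, mul_sub, X_mul]

/-- degree of an exponent vector w.r.t. configuration v -/
def Adeg {n q : ℕ} (v : Fin q → Fin n → ℤ) (a : Fin q → ℕ) : Fin n → ℤ := ∑ i, a i • v i

lemma Adeg_add (v : Fin q → Fin n → ℤ) (a b : Fin q → ℕ) :
    Adeg v (a + b) = Adeg v a + Adeg v b := by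
  simp [Adeg, add_smul, Finset.sum_add_distrib]

lemma toric_gen_mem {v : Fin q → Fin n → ℤ} {a b : Fin q → ℕ}
    (h : Adeg v a = Adeg v b) : binom K a b ∈ toricIdeal K v :=
  Ideal.subset_span ⟨a, b, h, rfl⟩

/-- The linear functional summing coefficients over exponents satisfying P. -/
noncomputable def Lfun (K : Type*) [Field K] {q : ℕ} (P : (Fin q →₀ ℕ) → Prop)
    (f : MvPolynomial (Fin q) K) : K :=
  ∑ m ∈ f.support, {m' | P m'}.indicator (fun m' => coeff m' f) m

lemma Lfun_def (P : (Fin q →₀ ℕ) → Prop) [DecidablePred P] (f : MvPolynomial (Fin q) K) :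
    Lfun K P f = ∑ m ∈ f.support, if P m then coeff m f else 0 := by
  unfold Lfun
  exact Finset.sum_congr rfl fun m _ => by rw [Set.indicator_apply]; exact if_congr Iff.rfl rfl rfl

open Classical in
lemma Lfun_add (P : (Fin q →₀ ℕ) → Prop) (f g : MvPolynomial (Fin q) K) :
    Lfun K P (f + g) = Lfun K P f + Lfun K P g := by
  classical
  have hsub : ∀ h : MvPolynomial (Fin q) K, h.support ⊆ f.support ∪ g.support →
      Lfun K P h = ∑ m ∈ f.support ∪ g.support, if P m then coeff m h else 0 := by
    intro h hh
    rw [Lfun_def]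
    refine Finset.sum_subset hh ?_
    intro m _ hm
    simp [MvPolynomial.notMem_support_iff.mp hm]
  rw [hsub (f + g) MvPolynomial.support_add, hsub f Finset.subset_union_left,
    hsub g Finset.subset_union_right, ← Finset.sum_add_distrib]
  refine Finset.sum_congr rfl fun m _ => ?_
  by_cases h : P m <;> simp [h, coeff_add]

open Classical in
lemma Lfun_monomial (P : (Fin q →₀ ℕ) → Prop) (m : Fin q →₀ ℕ) (c : K) :
    Lfun K P (monomial m c) = if P m then c else 0 := by
  classical
  rw [Lfun_def]
  by_cases hc : c = 0
  · simp [hc]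
  · simp [support_monomial, hc, coeff_monomial]

noncomputable def LfunHom (K : Type*) [Field K] {q : ℕ} (P : (Fin q →₀ ℕ) → Prop) :
    MvPolynomial (Fin q) K →+ K :=
  AddMonoidHom.mk' (Lfun K P) (Lfun_add P)

lemma Lfun_mul_binom (P : (Fin q →₀ ℕ) → Prop) (h : MvPolynomial (Fin q) K)
    (c d : Fin q → ℕ)
    (hinv : ∀ e : Fin q →₀ ℕ, P (e + Finsupp.equivFunOnFinite.symm c) ↔
      P (e + Finsupp.equivFunOnFinite.symm d)) :
    Lfun K P (h * binom K c d) = 0 := by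
  classical
  induction h using MvPolynomial.induction_on' with
  | monomial e s =>
    have : (monomial e s : MvPolynomial (Fin q) K) * binom K c d =
        monomial (e + Finsupp.equivFunOnFinite.symm c) s -
          monomial (e + Finsupp.equivFunOnFinite.symm d) s := by
      simp [binom, mul_sub, monomial_mul]
    rw [this]
    have h2 := (LfunHom K P).map_sub (monomial (e + Finsupp.equivFunOnFinite.symm c) s)
      (monomial (e + Finsupp.equivFunOnFinite.symm d) s)
    simp only [LfunHom, AddMonoidHom.mk'_apply] at h2
    rw [h2, Lfun_monomial, Lfun_monomial]
    by_cases hP : P (e + Finsupp.equivFunOnFinite.symm c)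
    · rw [if_pos hP, if_pos ((hinv e).mp hP), sub_self]
    · rw [if_neg hP, if_neg (fun hx => hP ((hinv e).mpr hx)), sub_self]
  | add f g hf hg =>
    rw [add_mul]
    have h2 := Lfun_add P (f * binom K c d) (g * binom K c d)
    rw [h2, hf, hg, add_zero]

/-- Key vanishing lemma: an invariant functional vanishes on the span of binomials. -/
lemma Lfun_vanish (P : (Fin q →₀ ℕ) → Prop) (T : Set (MvPolynomial (Fin q) K))
    (hT : ∀ g ∈ T, ∃ c d : Fin q → ℕ, g = binom K c d ∧
      ∀ e : Fin q →₀ ℕ, (P (e + Finsupp.equivFunOnFinite.symm c) ↔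
        P (e + Finsupp.equivFunOnFinite.symm d)))
    {f : MvPolynomial (Fin q) K} (hf : f ∈ Ideal.span T) : Lfun K P f = 0 := by
  classical
  rw [Ideal.span, ← Set.image_id T] at hf
  rcases Submodule.mem_span_set.mp (by rwa [Set.image_id] at hf) with ⟨cf, hcf, rfl⟩
  have : Lfun K P (cf.sum fun mi r => r • mi) =
      cf.sum fun mi r => Lfun K P (r • mi) := by
    exact map_finsuppSum (LfunHom K P) cf _
  rw [this, Finsupp.sum]
  refine Finset.sum_eq_zero fun g hg => ?_
  rcases hT g (hcf hg) with ⟨c, d, rfl, hinv⟩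
  rw [smul_eq_mul]
  exact Lfun_mul_binom P _ c d hinv

lemma coe_symm (a : Fin q → ℕ) : ⇑(Finsupp.equivFunOnFinite.symm a) = a := rfl

/-- From membership of a binomial in a binomial span, transfer an invariant property. -/
lemma P_transfer (P : (Fin q →₀ ℕ) → Prop) (T : Set (MvPolynomial (Fin q) K))
    (hT : ∀ g ∈ T, ∃ c d : Fin q → ℕ, g = binom K c d ∧
      ∀ e : Fin q →₀ ℕ, (P (e + Finsupp.equivFunOnFinite.symm c) ↔
        P (e + Finsupp.equivFunOnFinite.symm d)))
    {a b : Fin q → ℕ} (hf : binom K a b ∈ Ideal.span T)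
    (ha : P (Finsupp.equivFunOnFinite.symm a)) : P (Finsupp.equivFunOnFinite.symm b) := by
  classical
  have h0 := Lfun_vanish P T hT hf
  have h2 := (LfunHom K P).map_sub
    (monomial (Finsupp.equivFunOnFinite.symm a) (1:K))
    (monomial (Finsupp.equivFunOnFinite.symm b) (1:K))
  simp only [LfunHom, AddMonoidHom.mk'_apply] at h2
  rw [binom] at h0
  rw [h0] at h2
  rw [Lfun_monomial, Lfun_monomial, if_pos ha] at h2
  by_contra hb
  rw [if_neg hb, sub_zero] at h2
  exact one_ne_zero h2.symm

end Toric

namespace Toric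

variable {K : Type*} [Field K] {n q : ℕ}

/-- real version of the degree identity -/
lemma Adeg_real {v : Fin q → Fin n → ℤ} (a : Fin q → ℕ) (l : Fin n) :
    ((Adeg v a l : ℤ) : ℝ) = ∑ i, (a i : ℝ) * (v i l : ℝ) := by
  rw [Adeg, Finset.sum_apply]
  push_cast
  refine Finset.sum_congr rfl fun i _ => ?_
  rw [Pi.smul_apply, nsmul_eq_mul]
  push_cast
  ring

/-- Homogeneity: equal A-degrees give equal total degrees. -/
lemma total_deg_eq {v : Fin q → Fin n → ℤ} (hhom : IsHomogeneousConfig v)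
    {a b : Fin q → ℕ} (h : Adeg v a = Adeg v b) : ∑ i, a i = ∑ i, b i := by
  obtain ⟨w, hw⟩ := hhom
  have key : ∀ c : Fin q → ℕ, ((∑ i, c i : ℕ) : ℝ) = ∑ l, w l * ((Adeg v c l : ℤ) : ℝ) := by
    intro c
    have : ∀ l, w l * ((Adeg v c l : ℤ) : ℝ) = ∑ i, (c i : ℝ) * (w l * (v i l : ℝ)) := by
      intro l
      rw [Adeg_real, Finset.mul_sum]
      exact Finset.sum_congr rfl fun i _ => by ring
    rw [Finset.sum_congr rfl fun l _ => this l, Finset.sum_comm]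
    push_cast
    refine Finset.sum_congr rfl fun i _ => ?_
    rw [← Finset.mul_sum, hw i, mul_one]
  have := key a
  rw [h, ← key b] at this
  exact_mod_cast this

/-- ℤ-linear relation from a circuit gives the ℕ-relation between its parts. -/
lemma posExp_negExp_rel {v : Fin q → Fin n → ℤ} {α : Fin q → ℤ}
    (h : (∑ i, α i • v i) = 0) : Adeg v (posExp α) = Adeg v (negExp α) := by
  have key : ∀ i, (posExp α i) • v i = (negExp α i) • v i + α i • v i := by
    intro i
    have h1 : ((posExp α i : ℤ)) = ((negExp α i : ℤ)) + α i := by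
      have := Int.toNat_sub_toNat_neg (α i)
      simp only [posExp, negExp]
      omega
    have : ((posExp α i : ℤ)) • v i = (((negExp α i : ℤ)) + α i) • v i := by rw [h1]
    rw [add_smul] at this
    simpa [natCast_zsmul] using this
  rw [Adeg, Adeg, Finset.sum_congr rfl fun i _ => key i, Finset.sum_add_distrib, h, add_zero]

lemma neg_circuit {v : Fin q → Fin n → ℤ} {α : Fin q → ℤ} (h : IsCircuitVec v α) :
    IsCircuitVec v (-α) := by
  obtain ⟨h1, h2, h3, h4⟩ := h
  refine ⟨by simpa using h1, ?_, ?_, ?_⟩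
  · have : (∑ i, (-α) i • v i) = -∑ i, α i • v i := by
      rw [← Finset.sum_neg_distrib]
      exact Finset.sum_congr rfl fun i _ => by simp [neg_smul]
    rw [this, h2, neg_zero]
  · intro β hβ hβ0 hsupp
    have : Function.support (-α) = Function.support α := Function.support_neg α
    rw [this] at hsupp ⊢
    exact h3 β hβ hβ0 hsupp
  · rw [← h4]
    refine dvd_antisymm_of_normalize_eq Finset.normalize_gcd Finset.normalize_gcd ?_ ?_
    · refine Finset.dvd_gcd fun i _ => dvd_neg.mp ?_
      have : Finset.univ.gcd (-α) ∣ (-α) i := Finset.gcd_dvd (Finset.mem_univ i)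
      simpa using this
    · refine Finset.dvd_gcd fun i _ => ?_
      have : Finset.univ.gcd α ∣ α i := Finset.gcd_dvd (Finset.mem_univ i)
      show Finset.univ.gcd α ∣ -(α i)
      exact dvd_neg.mpr this

lemma posExp_neg (α : Fin q → ℤ) : posExp (-α) = negExp α := rfl

lemma negExp_neg (α : Fin q → ℤ) : negExp (-α) = posExp α := by
  funext i; simp [negExp, posExp]


/-! ### membership in the toric ideal and chains -/

lemma toric_rel {v : Fin q → Fin n → ℤ} {a b : Fin q → ℕ}
    (h : binom K a b ∈ toricIdeal K v) : Adeg v a = Adeg v b := by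
  have := P_transfer (K := K) (fun m => Adeg v ⇑m = Adeg v a)
    { f | ∃ a b : Fin q → ℕ, (∑ i, a i • v i) = (∑ i, b i • v i) ∧ f = binom K a b }
    ?_ h ?_
  · have h2 : Adeg v b = Adeg v a := this
    exact h2.symm
  · rintro g ⟨c, d, hrel, rfl⟩
    refine ⟨c, d, rfl, fun e => ?_⟩
    show Adeg v (⇑e + c) = Adeg v a ↔ Adeg v (⇑e + d) = Adeg v a
    rw [Adeg_add, Adeg_add]
    have : Adeg v c = Adeg v d := hrel
    rw [this]
  · rfl

/-- One move by a circuit. -/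
def Step (v : Fin q → Fin n → ℤ) (u w : Fin q → ℕ) : Prop :=
  ∃ (α : Fin q → ℤ) (e : Fin q → ℕ), IsCircuitVec v α ∧ u = e + posExp α ∧ w = e + negExp α

/-- Chains of moves of given length. -/
def Chain (v : Fin q → Fin n → ℤ) : ℕ → (Fin q → ℕ) → (Fin q → ℕ) → Prop
  | 0 => fun u w => u = w
  | (r+1) => fun u w => ∃ m, Step v u m ∧ Chain v r m w

lemma Step.symm {v : Fin q → Fin n → ℤ} {u w : Fin q → ℕ} (h : Step v u w) : Step v w u := by
  obtain ⟨α, e, hα, hu, hw⟩ := h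
  exact ⟨-α, e, neg_circuit hα, by rw [posExp_neg]; exact hw, by rw [negExp_neg]; exact hu⟩

lemma Step.adeg {v : Fin q → Fin n → ℤ} {u w : Fin q → ℕ} (h : Step v u w) :
    Adeg v u = Adeg v w := by
  obtain ⟨α, e, hα, rfl, rfl⟩ := h
  rw [Adeg_add, Adeg_add, posExp_negExp_rel hα.2.1]

lemma Chain.append {v : Fin q → Fin n → ℤ} {r : ℕ} {u w z : Fin q → ℕ}
    (h : Chain v r u w) (hs : Step v w z) : Chain v (r+1) u z := by
  induction r generalizing u with
  | zero => exact ⟨z, h ▸ hs, rfl⟩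
  | succ r ih =>
    obtain ⟨m, hm, hc⟩ := h
    exact ⟨m, hm, ih hc⟩

lemma Chain.last {v : Fin q → Fin n → ℤ} {r : ℕ} {u z : Fin q → ℕ}
    (h : Chain v (r+1) u z) : ∃ w, Chain v r u w ∧ Step v w z := by
  induction r generalizing u with
  | zero => obtain ⟨m, hm, hc⟩ := h; exact ⟨u, rfl, hc ▸ hm⟩
  | succ r ih =>
    obtain ⟨m, hm, hc⟩ := h
    obtain ⟨w, hw, hs⟩ := ih hc
    exact ⟨w, ⟨m, hm, hw⟩, hs⟩

/-- Chain extraction: a binomial in the circuit ideal connects its exponents by moves. -/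
lemma conn_of_mem_JC {v : Fin q → Fin n → ℤ} {a b : Fin q → ℕ}
    (h : binom K a b ∈ Ideal.span {g : MvPolynomial (Fin q) K | IsCircuitPoly K v g}) :
    ∃ r, Chain v r a b := by
  have := P_transfer (K := K) (fun m => ∃ r, Chain v r a ⇑m)
    {g : MvPolynomial (Fin q) K | IsCircuitPoly K v g} ?_ h ?_
  · exact this
  · rintro g ⟨α, hα, rfl⟩
    refine ⟨posExp α, negExp α, rfl, fun e => ?_⟩
    show (∃ r, Chain v r a (⇑e + posExp α)) ↔ (∃ r, Chain v r a (⇑e + negExp α))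
    constructor
    · rintro ⟨r, hr⟩
      exact ⟨r + 1, hr.append ⟨α, ⇑e, hα, rfl, rfl⟩⟩
    · rintro ⟨r, hr⟩
      exact ⟨r + 1, hr.append (Step.symm ⟨α, ⇑e, hα, rfl, rfl⟩)⟩
  · exact ⟨0, rfl⟩

/-! ### normality -/

lemma adeg_mem_monoid (v : Fin q → Fin n → ℤ) (u : Fin q → ℕ) :
    Adeg v u ∈ AddSubmonoid.closure (Set.range v) :=
  sum_mem fun i _ => nsmul_mem (AddSubmonoid.subset_closure (Set.mem_range_self i)) _

lemma adeg_mem_group (v : Fin q → Fin n → ℤ) (u : Fin q → ℕ) :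
    Adeg v u ∈ AddSubgroup.closure (Set.range v) :=
  sum_mem fun i _ => nsmul_mem (AddSubgroup.subset_closure (Set.mem_range_self i)) _

lemma monoid_closure_exists {v : Fin q → Fin n → ℤ} {x : Fin n → ℤ}
    (hx : x ∈ AddSubmonoid.closure (Set.range v)) : ∃ u : Fin q → ℕ, x = Adeg v u := by
  refine AddSubmonoid.closure_induction ?_ ?_ ?_ hx
  · rintro x ⟨i, rfl⟩
    refine ⟨fun j => if j = i then 1 else 0, ?_⟩
    rw [Adeg]
    rw [Finset.sum_congr rfl (fun j _ => by
      show (if j = i then 1 else 0) • v j = if j = i then v j else 0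
      split <;> simp)]
    simp
  · exact ⟨0, by simp [Adeg]⟩
  · rintro x y hx hy ⟨ux, rfl⟩ ⟨uy, rfl⟩
    exact ⟨ux + uy, (Adeg_add v ux uy).symm⟩

/-- Extract an ℕ-representation from normality. -/
lemma normal_extract {v : Fin q → Fin n → ℤ} (hnorm : IsNormalConfig v)
    {x : Fin n → ℤ} (hgrp : x ∈ AddSubgroup.closure (Set.range v))
    (c : Fin q → ℝ) (hc : ∀ i, 0 ≤ c i) (hx : ∀ l, ((x l : ℤ) : ℝ) = ∑ i, c i * (v i l : ℝ)) :
    ∃ u : Fin q → ℕ, x = Adeg v u :=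
  monoid_closure_exists ((hnorm x).mpr ⟨hgrp, c, hc, hx⟩)

/-! ### basic circuit facts -/

lemma exists_negExp_ne_zero {v : Fin q → Fin n → ℤ} (hhom : IsHomogeneousConfig v)
    {α : Fin q → ℤ} (hα : IsCircuitVec v α) : ∃ i, negExp α i ≠ 0 := by
  by_contra h
  push_neg at h
  have hneg : negExp α = 0 := funext fun i => by simpa using h i
  have h1 : Adeg v (posExp α) = Adeg v (negExp α) := posExp_negExp_rel hα.2.1
  have h2 : ∑ i, posExp α i = ∑ i, negExp α i := total_deg_eq hhom h1
  rw [hneg] at h2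
  simp only [Pi.zero_apply, Finset.sum_const_zero] at h2
  have h3 : ∀ i, posExp α i = 0 := by
    intro i
    by_contra hi
    have : 0 < ∑ i, posExp α i :=
      Finset.sum_pos' (fun j _ => Nat.zero_le _) ⟨i, Finset.mem_univ i, Nat.pos_of_ne_zero hi⟩
    omega
  refine hα.1 (funext fun i => ?_)
  have h4 := h3 i
  have h5 := h i
  simp only [posExp] at h4
  simp only [negExp] at h5
  show α i = 0
  omega

lemma exists_posExp_ne_zero {v : Fin q → Fin n → ℤ} (hhom : IsHomogeneousConfig v)
    {α : Fin q → ℤ} (hα : IsCircuitVec v α) : ∃ i, posExp α i ≠ 0 := by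
  obtain ⟨i, hi⟩ := exists_negExp_ne_zero hhom (neg_circuit hα)
  rw [negExp_neg] at hi
  exact ⟨i, hi⟩

/-! ### moves into the square-free circuit ideal -/

lemma sf_circuit_mem {v : Fin q → Fin n → ℤ} {α : Fin q → ℤ} (hα : IsCircuitVec v α)
    (hsq : SqFreePair (posExp α) (negExp α)) :
    binom K (posExp α) (negExp α) ∈ Ideal.span {g : MvPolynomial (Fin q) K | IsSqFreeCircuitPoly K v g} :=
  Ideal.subset_span ⟨α, hα, rfl, hsq⟩

lemma binom_neg (a b : Fin q → ℕ) : binom K a b = -(binom K b a) := by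
  simp [binom_eq]

lemma binom_self (a : Fin q → ℕ) : binom K a a = 0 := by simp [binom_eq]

lemma binom_trans (a u b : Fin q → ℕ) : binom K a b = binom K a u + binom K u b := by
  simp [binom_eq]

lemma sum_lt_of_lt {a c : Fin q → ℕ} {i : Fin q} (hca : ∀ j, c j ≤ a j) (hi : c i < a i) :
    ∑ j, c j < ∑ j, a j :=
  Finset.sum_lt_sum (fun j _ => hca j) ⟨i, Finset.mem_univ i, hi⟩

lemma hcommon {v : Fin q → Fin n → ℤ} {a b : Fin q → ℕ} {i : Fin q}
    (IH : ∀ a' b' : Fin q → ℕ, (∑ j, a' j) < (∑ j, a j) → Adeg v a' = Adeg v b' →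
      binom K a' b' ∈ Ideal.span {g : MvPolynomial (Fin q) K | IsSqFreeCircuitPoly K v g})
    (hAdeg : Adeg v a = Adeg v b) (hai : a i ≠ 0) (hbi : b i ≠ 0) :
    binom K a b ∈ Ideal.span {g : MvPolynomial (Fin q) K | IsSqFreeCircuitPoly K v g} := by
  classical
  set e : Fin q → ℕ := fun j => if j = i then 1 else 0 with he
  have hev : ∀ j, e j = if j = i then 1 else 0 := fun j => rfl
  have hei : e i = 1 := by rw [hev i, if_pos rfl]
  have hele : ∀ j, e j ≤ a j := by
    intro j; rw [hev j]
    by_cases hj : j = i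
    · subst hj; rw [if_pos rfl]; omega
    · rw [if_neg hj]; omega
  have heleb : ∀ j, e j ≤ b j := by
    intro j; rw [hev j]
    by_cases hj : j = i
    · subst hj; rw [if_pos rfl]; omega
    · rw [if_neg hj]; omega
  have hea : e + (a - e) = a := by
    funext j; simp only [Pi.add_apply, Pi.sub_apply]
    have := hele j; omega
  have heb : e + (b - e) = b := by
    funext j; simp only [Pi.add_apply, Pi.sub_apply]
    have := heleb j; omega
  have key : binom K a b = X K e * binom K (a - e) (b - e) := by
    rw [X_mul_binom, hea, heb]
  have hAdeg' : Adeg v (a - e) = Adeg v (b - e) := by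
    have h1 : Adeg v e + Adeg v (a - e) = Adeg v e + Adeg v (b - e) := by
      rw [← Adeg_add, ← Adeg_add, hea, heb, hAdeg]
    exact add_left_cancel h1
  have hlt : ∑ j, (a - e) j < ∑ j, a j := by
    refine sum_lt_of_lt (fun j => by simp only [Pi.sub_apply]; omega) (i := i) ?_
    simp only [Pi.sub_apply, hei]
    omega
  rw [key]
  exact Ideal.mul_mem_left _ _ (IH _ _ hlt hAdeg')

lemma hmove {v : Fin q → Fin n → ℤ} (hhom : IsHomogeneousConfig v) {a b c d : Fin q → ℕ}
    (IH : ∀ a' b' : Fin q → ℕ, (∑ j, a' j) < (∑ j, a j) → Adeg v a' = Adeg v b' →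
      binom K a' b' ∈ Ideal.span {g : MvPolynomial (Fin q) K | IsSqFreeCircuitPoly K v g})
    (hAdeg : Adeg v a = Adeg v b) (hcd : Adeg v c = Adeg v d)
    (hca : ∀ j, c j ≤ a j)
    (hf : binom K c d ∈ Ideal.span {g : MvPolynomial (Fin q) K | IsSqFreeCircuitPoly K v g})
    (hmeet : ∃ i, d i ≠ 0 ∧ b i ≠ 0) :
    binom K a b ∈ Ideal.span {g : MvPolynomial (Fin q) K | IsSqFreeCircuitPoly K v g} := by
  set a1 : Fin q → ℕ := (a - c) + d with ha1
  have hac : (a - c) + c = a := by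
    funext j; simp only [Pi.add_apply, Pi.sub_apply]
    have := hca j; omega
  have key : binom K a b = X K (a - c) * binom K c d + binom K a1 b := by
    rw [X_mul_binom, hac, ha1]
    have : (a - c) + d = a - c + d := rfl
    rw [binom_trans a (a - c + d) b]
  have hAdeg1 : Adeg v a1 = Adeg v a := by
    rw [ha1, Adeg_add, hcd.symm, ← Adeg_add, hac]
  have hsum1 : ∑ j, a1 j = ∑ j, a j := by
    have h1 : ∑ j, c j = ∑ j, d j := total_deg_eq hhom hcd
    have : ∀ j, a1 j = a j - c j + d j := fun j => rfl
    calc ∑ j, a1 j = ∑ j, (a j - c j) + ∑ j, d j := by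
          rw [Finset.sum_congr rfl fun j _ => this j, Finset.sum_add_distrib]
      _ = ∑ j, a j := by
          rw [← h1, ← Finset.sum_add_distrib]
          exact Finset.sum_congr rfl fun j _ => by have := hca j; omega
  rw [key]
  refine Ideal.add_mem _ (Ideal.mul_mem_left _ _ hf) ?_
  obtain ⟨i, hdi, hbi⟩ := hmeet
  have ha1i : a1 i ≠ 0 := by
    simp only [ha1, Pi.add_apply, Pi.sub_apply]
    omega
  refine hcommon (fun a' b' hlt h' => IH a' b' (by omega) h') (hAdeg1.trans hAdeg) ha1i hbi


/-! ### conformal circuits -/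

lemma qker_apply {v : Fin q → Fin n → ℤ} {β : Fin q → ℚ}
    (h : (∑ i, β i • (fun l => (v i l : ℚ))) = 0) (l : Fin n) :
    ∑ i, β i * (v i l : ℚ) = 0 := by
  have := congrFun h l
  rw [Finset.sum_apply] at this
  simpa [smul_eq_mul] using this

lemma qker_of_apply {v : Fin q → Fin n → ℤ} {β : Fin q → ℚ}
    (h : ∀ l, ∑ i, β i * (v i l : ℚ) = 0) :
    (∑ i, β i • (fun l => (v i l : ℚ))) = 0 := by
  funext l
  rw [Finset.sum_apply]
  simpa [smul_eq_mul] using h l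

/-- clear denominators of a rational vector -/
lemma rat_clear (β : Fin q → ℚ) :
    ∃ (m : ℕ) (β' : Fin q → ℤ), 0 < m ∧ (∀ i, (β' i : ℚ) = (m : ℚ) * β i) ∧
      (∀ i, β' i = 0 ↔ β i = 0) := by
  classical
  set m : ℕ := ∏ j, (β j).den with hm
  have hmpos : 0 < m := Finset.prod_pos fun j _ => (β j).pos
  refine ⟨m, fun i => (β i).num * ((m / (β i).den : ℕ) : ℤ), hmpos, ?_, ?_⟩
  · intro i
    have hdvd : (β i).den ∣ m := Finset.dvd_prod_of_mem _ (Finset.mem_univ i)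
    have hden : ((β i).den : ℚ) ≠ 0 := by exact_mod_cast (β i).den_nz
    have h1 : ((m / (β i).den : ℕ) : ℚ) = (m : ℚ) / ((β i).den : ℚ) := Nat.cast_div hdvd hden
    calc (((β i).num * ((m / (β i).den : ℕ) : ℤ) : ℤ) : ℚ)
        = ((β i).num : ℚ) * (((m / (β i).den : ℕ) : ℤ) : ℚ) := by rw [Int.cast_mul]
      _ = ((β i).num : ℚ) * ((m / (β i).den : ℕ) : ℚ) := by rw [Int.cast_natCast]
      _ = ((β i).num : ℚ) * ((m : ℚ) / ((β i).den : ℚ)) := by rw [h1]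
      _ = (m : ℚ) * (((β i).num : ℚ) / ((β i).den : ℚ)) := by ring
      _ = (m : ℚ) * β i := by rw [Rat.num_div_den]
  · intro i
    have hdvd : (β i).den ∣ m := Finset.dvd_prod_of_mem _ (Finset.mem_univ i)
    have hdiv : 0 < m / (β i).den := Nat.div_pos (Nat.le_of_dvd hmpos hdvd) (β i).pos
    constructor
    · intro h
      rcases mul_eq_zero.mp h with h | h
      · exact Rat.num_eq_zero.mp h
      · exfalso; have : (m / (β i).den : ℕ) = 0 := by exact_mod_cast h
        omega
    · intro h
      have hnum : (β i).num = 0 := Rat.num_eq_zero.mpr h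
      show (β i).num * ((m / (β i).den : ℕ) : ℤ) = 0
      rw [hnum, zero_mul]

lemma smul_cancel_pi {g : ℤ} (hg : g ≠ 0) {x : Fin n → ℤ} (h : ∀ l, g * x l = 0) : x = 0 := by
  funext l
  rcases mul_eq_zero.mp (h l) with h' | h'
  · exact absurd h' hg
  · exact h'

set_option maxHeartbeats 1000000 in
/-- Every nonzero integer kernel vector has a conformal circuit. -/
lemma exists_conformal_circuit {v : Fin q → Fin n → ℤ} :
    ∀ (N : ℕ) (γ : Fin q → ℤ), (Finset.univ.filter (fun i => γ i ≠ 0)).card ≤ N →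
      γ ≠ 0 → (∑ i, γ i • v i) = 0 →
      ∃ α : Fin q → ℤ, IsCircuitVec v α ∧ (∀ i, 0 ≤ α i * γ i) ∧ (∀ i, γ i = 0 → α i = 0) := by
  classical
  intro N
  induction N with
  | zero =>
    intro γ hcard hγ hker
    exfalso
    apply hγ
    funext i
    by_contra hi
    have : i ∈ Finset.univ.filter (fun i => γ i ≠ 0) := by
      simp only [Finset.mem_filter, Finset.mem_univ, true_and]; exact hi
    have := Finset.card_pos.mpr ⟨i, this⟩
    omega
  | succ N ih =>
    intro γ hcard hγ hker
    by_cases Hmin : ∀ β : Fin q → ℚ, (∑ i, β i • (fun l => (v i l : ℚ))) = 0 → β ≠ 0 →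
        Function.support β ⊆ Function.support γ → Function.support β = Function.support γ
    · -- γ has minimal support: primitivize it
      set g : ℤ := Finset.univ.gcd γ with hg
      have hgdvd : ∀ i, g ∣ γ i := fun i => Finset.gcd_dvd (Finset.mem_univ i)
      have hgne : g ≠ 0 := by
        intro h0
        apply hγ
        funext i
        have := Finset.gcd_eq_zero_iff.mp (hg ▸ h0) i (Finset.mem_univ i)
        exact this
      have hgnonneg : 0 ≤ g := Int.nonneg_of_normalize_eq_self (hg ▸ Finset.normalize_gcd)
      have hgpos : 0 < g := lt_of_le_of_ne hgnonneg (Ne.symm hgne)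
      set α : Fin q → ℤ := fun i => γ i / g with hα
      have hαg : ∀ i, g * α i = γ i := fun i => Int.mul_ediv_cancel' (hgdvd i)
      have hsupp : ∀ i, α i = 0 ↔ γ i = 0 := by
        intro i
        constructor
        · intro h; rw [← hαg i, h, mul_zero]
        · intro h; rw [hα]; simp only [h, Int.zero_ediv]
      have hαne : α ≠ 0 := by
        intro h0
        apply hγ
        funext i
        have : α i = 0 := by rw [h0]; rfl
        exact (hsupp i).mp this
      have hαker : (∑ i, α i • v i) = 0 := by
        refine smul_cancel_pi hgne fun l => ?_
        have h1 : ∀ i, g * (α i • v i) l = γ i • v i l := by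
          intro i
          rw [Pi.smul_apply, smul_eq_mul, smul_eq_mul, ← mul_assoc, hαg i]
        calc g * (∑ i, α i • v i) l = ∑ i, g * (α i • v i) l := by
              rw [Finset.sum_apply, Finset.mul_sum]
          _ = ∑ i, γ i • v i l := Finset.sum_congr rfl fun i _ => h1 i
          _ = (∑ i, γ i • v i) l := by rw [Finset.sum_apply]; rfl
          _ = 0 := by rw [hker]; rfl
      have hsupp_eq : Function.support α = Function.support γ := by
        ext i
        simp only [Function.mem_support]
        exact not_congr (hsupp i)
      have hgcd1 : Finset.univ.gcd α = 1 := by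
        set g' := Finset.univ.gcd α with hg'
        have hg'nonneg : 0 ≤ g' := Int.nonneg_of_normalize_eq_self (hg' ▸ Finset.normalize_gcd)
        have hdvd : g * g' ∣ g := by
          rw [hg]
          refine Finset.dvd_gcd fun i _ => ?_
          have h1 : g' ∣ α i := Finset.gcd_dvd (Finset.mem_univ i)
          rw [← hαg i]
          exact mul_dvd_mul_left g h1
        have : g' ∣ 1 := by
          rcases hdvd with ⟨c, hc⟩
          have : g * (g' * c) = g * 1 := by rw [← mul_assoc, ← hc, mul_one]
          have := mul_left_cancel₀ hgne this
          exact ⟨c, this.symm⟩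
        exact Int.eq_one_of_dvd_one hg'nonneg this
      refine ⟨α, ⟨hαne, hαker, ?_, hgcd1⟩, ?_, fun i h => (hsupp i).mpr h⟩
      · intro β hβker hβne hβsupp
        rw [hsupp_eq] at hβsupp ⊢
        exact Hmin β hβker hβne hβsupp
      · intro i
        have : α i * γ i = g * (α i * α i) := by rw [← hαg i]; ring
        rw [this]
        exact mul_nonneg (le_of_lt hgpos) (mul_self_nonneg _)
    · -- support is not minimal: find a smaller conformal kernel vector and recurse
      push_neg at Hmin
      obtain ⟨β, hβker, hβne, hβsub, hβne_supp⟩ := Hmin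
      obtain ⟨m, β', hmpos, hβ'cast, hβ'zero⟩ := rat_clear β
      -- β' is an integer kernel vector with the same support as β
      have hβ'ker : ∀ l, ∑ i, (β' i : ℚ) * (v i l : ℚ) = 0 := by
        intro l
        have h1 := qker_apply hβker l
        calc ∑ i, (β' i : ℚ) * (v i l : ℚ) = ∑ i, (m : ℚ) * (β i * (v i l : ℚ)) := by
              refine Finset.sum_congr rfl fun i _ => ?_
              rw [hβ'cast i]; ring
          _ = (m : ℚ) * ∑ i, β i * (v i l : ℚ) := by rw [Finset.mul_sum]
          _ = 0 := by rw [h1, mul_zero]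
      have hβ'kerZ : ∀ l, ∑ i, β' i * v i l = 0 := by
        intro l
        have := hβ'ker l
        have h2 : ((∑ i, β' i * v i l : ℤ) : ℚ) = 0 := by push_cast; exact this
        exact_mod_cast h2
      have hβ'sub : ∀ i, γ i = 0 → β' i = 0 := by
        intro i hi
        rw [hβ'zero i]
        by_contra hne
        exact (Function.mem_support.mp (hβsub (Function.mem_support.mpr hne))) hi
      obtain ⟨jstar, hjγ, hjβ⟩ : ∃ j, γ j ≠ 0 ∧ β' j = 0 := by
        have : ∃ j, γ j ≠ 0 ∧ β j = 0 := by
          by_contra h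
          push_neg at h
          apply hβne_supp
          ext i
          simp only [Function.mem_support]
          constructor
          · intro hi hγi
            exact (Function.mem_support.mp (hβsub (Function.mem_support.mpr hi))) hγi
          · intro hi
            exact h i hi
        obtain ⟨j, h1, h2⟩ := this
        exact ⟨j, h1, (hβ'zero j).mpr h2⟩
      -- make sure some product is positive
      have hβ'ne : ∃ i, β' i ≠ 0 := by
        by_contra h
        push_neg at h
        apply hβne
        funext i
        exact (hβ'zero i).mp (h i)
      obtain ⟨β0, hβ0kerZ, hβ0sub, hβ0j, hβ0pos⟩ :
          ∃ β0 : Fin q → ℤ, (∀ l, ∑ i, β0 i * v i l = 0) ∧ (∀ i, γ i = 0 → β0 i = 0) ∧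
            β0 jstar = 0 ∧ ∃ i, 0 < β0 i * γ i := by
        obtain ⟨i0, hi0⟩ := hβ'ne
        have hγi0 : γ i0 ≠ 0 := by
          intro h
          exact hi0 (hβ'sub i0 h)
        have hprod : β' i0 * γ i0 ≠ 0 := mul_ne_zero hi0 hγi0
        rcases lt_or_gt_of_ne hprod with h | h
        · refine ⟨-β', fun l => ?_, fun i hi => by rw [Pi.neg_apply, hβ'sub i hi, neg_zero],
            by rw [Pi.neg_apply, hjβ, neg_zero], ⟨i0, ?_⟩⟩
          · have := hβ'kerZ l
            calc ∑ i, (-β') i * v i l = -∑ i, β' i * v i l := by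
                  rw [← Finset.sum_neg_distrib]
                  exact Finset.sum_congr rfl fun i _ => by rw [Pi.neg_apply]; ring
            _ = 0 := by rw [this, neg_zero]
          · rw [Pi.neg_apply]; nlinarith
        · exact ⟨β', hβ'kerZ, hβ'sub, hjβ, ⟨i0, h⟩⟩
      -- choose the pivot minimizing the ratio |γ i| / |β0 i|
      set T : Finset (Fin q) := Finset.univ.filter (fun i => 0 < β0 i * γ i) with hT
      have hTne : T.Nonempty := by
        obtain ⟨i, hi⟩ := hβ0pos
        exact ⟨i, by simp only [hT, Finset.mem_filter, Finset.mem_univ, true_and]; exact hi⟩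
      obtain ⟨i0, hi0T, hi0min⟩ := T.exists_min_image
        (fun i => ((γ i).natAbs : ℚ) / ((β0 i).natAbs : ℚ)) hTne
      have hi0prod : 0 < β0 i0 * γ i0 := by
        have := hi0T
        simp only [hT, Finset.mem_filter, Finset.mem_univ, true_and] at this
        exact this
      have hβ0i0ne : β0 i0 ≠ 0 := by
        intro h; rw [h, zero_mul] at hi0prod; exact lt_irrefl 0 hi0prod
      have hγi0ne : γ i0 ≠ 0 := by
        intro h; rw [h, mul_zero] at hi0prod; exact lt_irrefl 0 hi0prod
      -- the new vector
      set γ' : Fin q → ℤ := fun i => (β0 i0).natAbs * γ i - (γ i0).natAbs * β0 i with hγ'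
      have hA0 : (0:ℤ) < ((β0 i0).natAbs : ℤ) := by
        have : (β0 i0).natAbs ≠ 0 := Int.natAbs_ne_zero.mpr hβ0i0ne
        omega
      have hB0 : (0:ℤ) < ((γ i0).natAbs : ℤ) := by
        have : (γ i0).natAbs ≠ 0 := Int.natAbs_ne_zero.mpr hγi0ne
        omega
      have habs : ((β0 i0).natAbs : ℤ) * γ i0 = ((γ i0).natAbs : ℤ) * β0 i0 := by
        rcases lt_or_gt_of_ne hβ0i0ne with h | h
        · have hγneg : γ i0 < 0 := by nlinarith
          rw [Int.ofNat_natAbs_of_nonpos (le_of_lt h), Int.ofNat_natAbs_of_nonpos (le_of_lt hγneg)]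
          ring
        · have hγpos : 0 < γ i0 := by nlinarith
          rw [Int.natAbs_of_nonneg (le_of_lt h), Int.natAbs_of_nonneg (le_of_lt hγpos)]
          ring
      have hγ'i0 : γ' i0 = 0 := by
        rw [hγ']
        simp only []
        rw [habs]
        ring
      have hγ'conf2 : ∀ i, γ i = 0 → γ' i = 0 := by
        intro i hi
        rw [hγ']
        simp only []
        rw [hi, hβ0sub i hi]
        ring
      have hγ'conf1 : ∀ i, 0 ≤ γ' i * γ i := by
        intro i
        have hγ'i : γ' i = ((β0 i0).natAbs : ℤ) * γ i - ((γ i0).natAbs : ℤ) * β0 i := rfl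
        rcases lt_trichotomy (β0 i * γ i) 0 with h | h | h
        · -- opposite signs: both terms help
          rw [hγ'i]
          nlinarith [sq_nonneg (γ i)]
        · -- one of them is zero
          rcases mul_eq_zero.mp h with h0 | h0
          · rw [hγ'i, h0]
            nlinarith [sq_nonneg (γ i)]
          · rw [h0]
            ring_nf
            simp
        · -- same signs: use minimality of the ratio
          have hiT : i ∈ T := by
            simp only [hT, Finset.mem_filter, Finset.mem_univ, true_and]; exact h
          have hβ0ine : β0 i ≠ 0 := by
            intro h0; rw [h0, zero_mul] at h; exact lt_irrefl 0 h
          have hγine : γ i ≠ 0 := by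
            intro h0; rw [h0, mul_zero] at h; exact lt_irrefl 0 h
          have hAi : (0:ℚ) < ((β0 i).natAbs : ℚ) := by
            have : (β0 i).natAbs ≠ 0 := Int.natAbs_ne_zero.mpr hβ0ine
            positivity
          have hAi0 : (0:ℚ) < ((β0 i0).natAbs : ℚ) := by
            have : (β0 i0).natAbs ≠ 0 := Int.natAbs_ne_zero.mpr hβ0i0ne
            positivity
          have hmin := hi0min i hiT
          rw [div_le_div_iff₀ hAi0 hAi] at hmin
          have hminZ : ((γ i0).natAbs : ℤ) * ((β0 i).natAbs : ℤ) ≤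
              ((γ i).natAbs : ℤ) * ((β0 i0).natAbs : ℤ) := by
            have : ((γ i0).natAbs * (β0 i).natAbs : ℕ) ≤ ((γ i).natAbs * (β0 i0).natAbs : ℕ) := by
              exact_mod_cast hmin
            exact_mod_cast this
          rw [hγ'i]
          rcases lt_trichotomy (γ i) 0 with hγi | hγi | hγi
          · have hβ0i : β0 i < 0 := by nlinarith
            rw [Int.ofNat_natAbs_of_nonpos (le_of_lt hγi), Int.ofNat_natAbs_of_nonpos (le_of_lt hβ0i)] at hminZ
            nlinarith
          · exact absurd hγi hγine
          · have hβ0i : 0 < β0 i := by nlinarith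
            rw [Int.natAbs_of_nonneg (le_of_lt hγi), Int.natAbs_of_nonneg (le_of_lt hβ0i)] at hminZ
            nlinarith
      have hγ'ne : γ' ≠ 0 := by
        intro h0
        have h1 : γ' jstar = 0 := by rw [h0]; rfl
        have h2 : γ' jstar = ((β0 i0).natAbs : ℤ) * γ jstar := by
          show ((β0 i0).natAbs : ℤ) * γ jstar - ((γ i0).natAbs : ℤ) * β0 jstar = _
          rw [hβ0j]
          ring
        rw [h2] at h1
        rcases mul_eq_zero.mp h1 with h | h
        · omega
        · exact hjγ h
      have hγ'ker : (∑ i, γ' i • v i) = 0 := by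
        funext l
        rw [Finset.sum_apply]
        have : ∀ i, (γ' i • v i) l = ((β0 i0).natAbs : ℤ) * (γ i * v i l) -
            ((γ i0).natAbs : ℤ) * (β0 i * v i l) := by
          intro i
          rw [Pi.smul_apply, smul_eq_mul]
          show (((β0 i0).natAbs : ℤ) * γ i - ((γ i0).natAbs : ℤ) * β0 i) * v i l = _
          ring
        rw [Finset.sum_congr rfl fun i _ => this i, Finset.sum_sub_distrib,
          ← Finset.mul_sum, ← Finset.mul_sum]
        have h1 : ∑ i, γ i * v i l = 0 := by
          have := congrFun hker l
          rw [Finset.sum_apply] at this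
          simpa [smul_eq_mul] using this
        rw [h1, hβ0kerZ l, mul_zero, mul_zero, sub_zero]
        rfl
      have hcard' : (Finset.univ.filter (fun i => γ' i ≠ 0)).card ≤ N := by
        have hsub : Finset.univ.filter (fun i => γ' i ≠ 0) ⊆
            (Finset.univ.filter (fun i => γ i ≠ 0)).erase i0 := by
          intro i hi
          simp only [Finset.mem_filter, Finset.mem_univ, true_and] at hi
          rw [Finset.mem_erase]
          constructor
          · intro h0; rw [h0] at hi; exact hi hγ'i0
          · simp only [Finset.mem_filter, Finset.mem_univ, true_and]
            intro h0
            exact hi (hγ'conf2 i h0)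
        have h1 := Finset.card_le_card hsub
        have h2 : i0 ∈ Finset.univ.filter (fun i => γ i ≠ 0) := by
          simp only [Finset.mem_filter, Finset.mem_univ, true_and]; exact hγi0ne
        rw [Finset.card_erase_of_mem h2] at h1
        omega
      obtain ⟨α, hαcirc, hαconf1, hαconf2⟩ := ih γ' hcard' hγ'ne hγ'ker
      refine ⟨α, hαcirc, ?_, ?_⟩
      · intro i
        rcases eq_or_ne (α i) 0 with h | h
        · rw [h, zero_mul]
        · have hγ'i : γ' i ≠ 0 := fun h0 => h (hαconf2 i h0)
          have hγi : γ i ≠ 0 := fun h0 => hγ'i (hγ'conf2 i h0)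
          have h1 : 0 < α i * γ' i := lt_of_le_of_ne (hαconf1 i) (Ne.symm (mul_ne_zero h hγ'i))
          have h2 : 0 < γ' i * γ i := lt_of_le_of_ne (hγ'conf1 i) (Ne.symm (mul_ne_zero hγ'i hγi))
          nlinarith [sq_nonneg (γ' i), mul_pos h1 h2]
      · intro i hi
        exact hαconf2 i (hγ'conf2 i hi)


/-! ### normality constructions -/

lemma alpha_ker_real {v : Fin q → Fin n → ℤ} {α : Fin q → ℤ}
    (h : (∑ i, α i • v i) = 0) (l : Fin n) : ∑ i, (α i : ℝ) * (v i l : ℝ) = 0 := by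
  have h1 : ∑ i, α i * v i l = 0 := by
    have := congrFun h l
    rw [Finset.sum_apply] at this
    simpa [smul_eq_mul] using this
  have h2 : ((∑ i, α i * v i l : ℤ) : ℝ) = 0 := by rw [h1]; simp
  push_cast at h2
  exact h2

lemma sum_ind_mul {j : Fin q} (f : Fin q → ℝ) :
    ∑ i, (if i = j then (1:ℝ) else 0) * f i = f j := by
  rw [Finset.sum_congr rfl (fun i _ => by
    show (if i = j then (1:ℝ) else 0) * f i = if i = j then f i else 0
    split <;> simp)]
  rw [Finset.sum_ite_eq' Finset.univ j f]
  simp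

lemma sum_ind_smul {v : Fin q → Fin n → ℤ} (j : Fin q) :
    ∑ i, (if i = j then (1:ℕ) else 0) • v i = v j := by
  rw [Finset.sum_congr rfl (fun i _ => by
    show (if i = j then (1:ℕ) else 0) • v i = if i = j then v i else 0
    split <;> simp)]
  rw [Finset.sum_ite_eq' Finset.univ j v]
  simp

lemma toNat_le_of_sup {α : Fin q → ℤ} {p : ℕ} (h : ∀ i, posExp α i ≤ p) (i : Fin q) :
    α i ≤ (p : ℤ) := by
  have := h i
  simp only [posExp] at this
  omega

lemma neg_toNat_le_of_sup {α : Fin q → ℤ} {p : ℕ} (h : ∀ i, negExp α i ≤ p) (i : Fin q) :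
    -(p : ℤ) ≤ α i := by
  have := h i
  simp only [negExp] at this
  omega

/-- The bridging element used for balanced circuits (needs normality). -/
lemma bridge_construct {v : Fin q → Fin n → ℤ} (hnorm : IsNormalConfig v)
    {b : Fin q → ℕ} {α : Fin q → ℤ} {p : ℕ} (hp : 2 ≤ p)
    (hub : ∀ i, α i ≤ (p:ℤ)) (hlb : ∀ i, -(p:ℤ) ≤ α i)
    (hαker : (∑ i, α i • v i) = 0)
    {j k : Fin q} (hjk : j ≠ k) (hαj : α j = (p:ℤ)) (hbj : b j = 0)
    (hbk : b k ≠ 0) (hsp : 2 ≤ b k ∨ α k = 0)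
    (hbneg : ∀ i, α i < 0 → b i ≠ 0) :
    ∃ u : Fin q → ℕ, Adeg v u = Adeg v b ∧ u j ≠ 0 ∧ u k ≠ 0 := by
  classical
  have hppos : (0:ℝ) < (p:ℝ) := by
    have : (0:ℕ) < p := by omega
    exact_mod_cast this
  set ξ : Fin q → ℝ := fun i => (b i:ℝ) + (α i:ℝ)/(p:ℝ)
    - (if i = j then 1 else 0) - (if i = k then 1 else 0) with hξ
  have hdiv : ∀ i, (p:ℝ) * ((α i:ℝ)/(p:ℝ)) = (α i:ℝ) :=
    fun i => mul_div_cancel₀ _ (ne_of_gt hppos)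
  have hnonneg : ∀ i, 0 ≤ ξ i := by
    intro i
    have hubi : (α i : ℝ) ≤ (p:ℝ) := by exact_mod_cast hub i
    have hlbi : -(p:ℝ) ≤ (α i : ℝ) := by exact_mod_cast hlb i
    have hm1 : -(1:ℝ) ≤ (α i:ℝ)/(p:ℝ) := by
      rw [neg_le, ← neg_div, div_le_one hppos]
      linarith
    by_cases hij : i = j
    · subst hij
      have : (α i : ℝ) = (p:ℝ) := by exact_mod_cast hαj
      simp only [hξ, if_pos rfl, if_neg hjk, hbj]
      rw [this]
      rw [div_self (ne_of_gt hppos)]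
      norm_num
    · by_cases hik : i = k
      · subst hik
        simp only [hξ, if_neg hij, if_pos rfl, if_true]
        have hbk1 : (1:ℝ) ≤ (b i:ℝ) := by
          have : 1 ≤ b i := Nat.one_le_iff_ne_zero.mpr hbk
          exact_mod_cast this
        rcases hsp with h2 | h0
        · have : (2:ℝ) ≤ (b i:ℝ) := by exact_mod_cast h2
          linarith
        · have hz : (α i : ℝ) = 0 := by exact_mod_cast h0
          rw [hz, zero_div]
          linarith
      · simp only [hξ, if_neg hij, if_neg hik]
        rcases le_or_gt 0 (α i) with h0 | h0
        · have h0' : (0:ℝ) ≤ (α i:ℝ) := by exact_mod_cast h0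
          have hb0 : (0:ℝ) ≤ (b i:ℝ) := by positivity
          have : (0:ℝ) ≤ (α i:ℝ)/(p:ℝ) := by positivity
          linarith
        · have hb1 : (1:ℝ) ≤ (b i:ℝ) := by
            have : 1 ≤ b i := Nat.one_le_iff_ne_zero.mpr (hbneg i h0)
            exact_mod_cast this
          linarith
  set y : Fin n → ℤ := Adeg v b - v j - v k with hy
  have hgrp : y ∈ AddSubgroup.closure (Set.range v) := by
    refine AddSubgroup.sub_mem _ (AddSubgroup.sub_mem _ (adeg_mem_group v b) ?_) ?_
    · exact AddSubgroup.subset_closure (Set.mem_range_self j)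
    · exact AddSubgroup.subset_closure (Set.mem_range_self k)
  have hid : ∀ l, ((y l : ℤ) : ℝ) = ∑ i, ξ i * (v i l : ℝ) := by
    intro l
    have hexp : ∀ i, ξ i * (v i l : ℝ) = (b i:ℝ)*(v i l:ℝ) + ((α i:ℝ)*(v i l:ℝ))/(p:ℝ)
        - (if i = j then (1:ℝ) else 0) * (v i l:ℝ) - (if i = k then (1:ℝ) else 0) * (v i l:ℝ) := by
      intro i
      rw [hξ]
      ring
    rw [Finset.sum_congr rfl fun i _ => hexp i]
    rw [Finset.sum_sub_distrib, Finset.sum_sub_distrib, Finset.sum_add_distrib]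
    rw [sum_ind_mul, sum_ind_mul]
    have h1 : ∑ i, ((α i:ℝ)*(v i l:ℝ))/(p:ℝ) = (∑ i, (α i:ℝ)*(v i l:ℝ))/(p:ℝ) := by
      rw [Finset.sum_div]
    rw [h1, alpha_ker_real hαker l, zero_div, add_zero]
    have h2 : ((y l : ℤ):ℝ) = ((Adeg v b l : ℤ):ℝ) - (v j l:ℝ) - (v k l:ℝ) := by
      rw [hy]
      push_cast [Pi.sub_apply]
      ring
    rw [h2, Adeg_real]
  obtain ⟨u0, hu0⟩ := normal_extract hnorm hgrp ξ hnonneg hid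
  refine ⟨fun i => u0 i + ((if i = j then 1 else 0) + (if i = k then 1 else 0)), ?_, ?_, ?_⟩
  · have : Adeg v (fun i => u0 i + ((if i = j then 1 else 0) + (if i = k then 1 else 0)))
        = Adeg v u0 + (v j + v k) := by
      rw [Adeg]
      rw [Finset.sum_congr rfl (fun i _ => by
        show (u0 i + ((if i = j then 1 else 0) + (if i = k then 1 else 0))) • v i =
          u0 i • v i + ((if i = j then (1:ℕ) else 0) • v i + (if i = k then (1:ℕ) else 0) • v i)
        rw [add_smul, add_smul])]
      rw [Finset.sum_add_distrib, Finset.sum_add_distrib, sum_ind_smul, sum_ind_smul]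
      rfl
    rw [this, ← hu0, hy]
    abel
  · show u0 j + ((if j = j then 1 else 0) + (if j = k then 1 else 0)) ≠ 0
    rw [if_pos rfl, if_neg hjk]
    omega
  · show u0 k + ((if k = j then 1 else 0) + (if k = k then 1 else 0)) ≠ 0
    rw [if_neg (Ne.symm hjk), if_pos rfl]
    omega

/-- The connector element for a circuit whose positive support has smaller maximum
(needs normality). -/
lemma connector_construct {v : Fin q → Fin n → ℤ} (hhom : IsHomogeneousConfig v)
    (hnorm : IsNormalConfig v) {α : Fin q → ℤ} (hα : IsCircuitVec v α)
    (hle : Finset.univ.sup (posExp α) ≤ Finset.univ.sup (negExp α)) (hq : 0 < q) :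
    ∃ d : Fin q → ℕ, Adeg v d = Adeg v (fun i => min 1 (posExp α i)) ∧
      ∃ k, d k ≠ 0 ∧ negExp α k ≠ 0 := by
  classical
  set p : ℕ := Finset.univ.sup (posExp α) with hpdef
  set P : ℕ := Finset.univ.sup (negExp α) with hPdef
  have huniv : (Finset.univ : Finset (Fin q)).Nonempty := by
    exact Finset.univ_nonempty_iff.mpr (Fin.pos_iff_nonempty.mp hq)
  have hppos : 0 < p := by
    obtain ⟨i, hi⟩ := exists_posExp_ne_zero hhom hα
    have h1 : posExp α i ≤ p := Finset.le_sup (Finset.mem_univ i)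
    omega
  have hPpos : 0 < P := by omega
  obtain ⟨k, _, hk⟩ := Finset.exists_mem_eq_sup Finset.univ huniv (negExp α)
  have hk' : negExp α k = P := by rw [hPdef, hk]
  have hαk : α k = -(P:ℤ) := by
    simp only [negExp] at hk'
    omega
  have hub : ∀ i, α i ≤ (p:ℤ) := toNat_le_of_sup (fun i => Finset.le_sup (Finset.mem_univ i))
  set c : Fin q → ℕ := fun i => min 1 (posExp α i) with hc
  have hpposR : (0:ℝ) < (p:ℝ) := by exact_mod_cast hppos
  set ξ : Fin q → ℝ := fun i => (c i:ℝ) - (α i:ℝ)/(p:ℝ) - (if i = k then 1 else 0) with hξ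
  have hnonneg : ∀ i, 0 ≤ ξ i := by
    intro i
    have hubi : (α i : ℝ) ≤ (p:ℝ) := by exact_mod_cast hub i
    by_cases hik : i = k
    · subst hik
      simp only [hξ, if_pos rfl, if_true]
      have hc0 : c i = 0 := by
        simp only [hc, posExp]
        omega
      have hα' : (α i : ℝ) = -((P:ℕ):ℝ) := by exact_mod_cast hαk
      rw [hc0, hα']
      have hPp : (p:ℝ) ≤ ((P:ℕ):ℝ) := by exact_mod_cast hle
      have h1 : (1:ℝ) ≤ ((P:ℕ):ℝ)/(p:ℝ) := by
        rw [le_div_iff₀ hpposR]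
        linarith
      rw [neg_div]
      push_cast
      linarith
    · simp only [hξ, if_neg hik, sub_zero]
      rcases le_or_gt (α i) 0 with h0 | h0
      · have hc0 : (0:ℝ) ≤ (c i:ℝ) := by positivity
        have : (α i : ℝ) ≤ 0 := by exact_mod_cast h0
        have : (α i:ℝ)/(p:ℝ) ≤ 0 := div_nonpos_of_nonpos_of_nonneg this (le_of_lt hpposR)
        nlinarith
      · have hc1 : c i = 1 := by
          simp only [hc, posExp]
          omega
        rw [hc1]
        have : (α i:ℝ)/(p:ℝ) ≤ 1 := by
          rw [div_le_one hpposR]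
          exact_mod_cast hubi
        norm_num
        exact this
  set y : Fin n → ℤ := Adeg v c - v k with hy
  have hgrp : y ∈ AddSubgroup.closure (Set.range v) := by
    refine AddSubgroup.sub_mem _ (adeg_mem_group v c) ?_
    exact AddSubgroup.subset_closure (Set.mem_range_self k)
  have hid : ∀ l, ((y l : ℤ) : ℝ) = ∑ i, ξ i * (v i l : ℝ) := by
    intro l
    have hexp : ∀ i, ξ i * (v i l : ℝ) = (c i:ℝ)*(v i l:ℝ) - ((α i:ℝ)*(v i l:ℝ))/(p:ℝ)
        - (if i = k then (1:ℝ) else 0) * (v i l:ℝ) := by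
      intro i
      rw [hξ]
      ring
    rw [Finset.sum_congr rfl fun i _ => hexp i]
    rw [Finset.sum_sub_distrib, Finset.sum_sub_distrib]
    rw [sum_ind_mul]
    have h1 : ∑ i, ((α i:ℝ)*(v i l:ℝ))/(p:ℝ) = (∑ i, (α i:ℝ)*(v i l:ℝ))/(p:ℝ) := by
      rw [Finset.sum_div]
    rw [h1, alpha_ker_real hα.2.1 l, zero_div, sub_zero]
    have h2 : ((y l : ℤ):ℝ) = ((Adeg v c l : ℤ):ℝ) - (v k l:ℝ) := by
      rw [hy]
      push_cast [Pi.sub_apply]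
      ring
    rw [h2, Adeg_real]
  obtain ⟨u0, hu0⟩ := normal_extract hnorm hgrp ξ hnonneg hid
  refine ⟨fun i => u0 i + (if i = k then 1 else 0), ?_, k, ?_, ?_⟩
  · have : Adeg v (fun i => u0 i + (if i = k then 1 else 0)) = Adeg v u0 + v k := by
      rw [Adeg]
      rw [Finset.sum_congr rfl (fun i _ => by
        show (u0 i + (if i = k then 1 else 0)) • v i =
          u0 i • v i + (if i = k then (1:ℕ) else 0) • v i
        rw [add_smul])]
      rw [Finset.sum_add_distrib, sum_ind_smul]
      rfl
    rw [this, ← hu0, hy]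
    show Adeg v c - v k + v k = Adeg v c
    abel
  · show u0 k + (if k = k then 1 else 0) ≠ 0
    rw [if_pos rfl]
    omega
  · omega


/-! ### the core descent -/

lemma Adeg_apply {v : Fin q → Fin n → ℤ} (a : Fin q → ℕ) (l : Fin n) :
    Adeg v a l = ∑ i, (a i : ℤ) * v i l := by
  rw [Adeg, Finset.sum_apply]
  exact Finset.sum_congr rfl fun i _ => by rw [Pi.smul_apply, nsmul_eq_mul]

set_option maxHeartbeats 1000000 in
lemma core {v : Fin q → Fin n → ℤ} (hq : 0 < q) (hhom : IsHomogeneousConfig v)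
    (hnorm : IsNormalConfig v) {a b : Fin q → ℕ}
    (IHlow : ∀ a' b' : Fin q → ℕ, (∑ j, a' j) < (∑ j, a j) → Adeg v a' = Adeg v b' →
      binom K a' b' ∈ Ideal.span {g : MvPolynomial (Fin q) K | IsSqFreeCircuitPoly K v g})
    (hAdeg : Adeg v a = Adeg v b)
    (h2a : ∀ α : Fin q → ℤ, IsCircuitVec v α →
      (∀ i, 0 < α i → (b i = 0 ∧ a i ≠ 0)) → (∀ i, α i < 0 → (a i = 0 ∧ b i ≠ 0)) →
      2 ≤ Finset.univ.sup (posExp α) →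
      Finset.univ.sup (posExp α) < Finset.univ.sup (negExp α) →
      binom K a b ∈ Ideal.span {g : MvPolynomial (Fin q) K | IsSqFreeCircuitPoly K v g})
    (h2b : ∀ α : Fin q → ℤ, IsCircuitVec v α →
      (∀ i, 0 < α i → (b i = 0 ∧ a i ≠ 0)) → (∀ i, α i < 0 → (a i = 0 ∧ b i ≠ 0)) →
      2 ≤ Finset.univ.sup (negExp α) →
      Finset.univ.sup (negExp α) < Finset.univ.sup (posExp α) →
      binom K a b ∈ Ideal.span {g : MvPolynomial (Fin q) K | IsSqFreeCircuitPoly K v g}) :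
    binom K a b ∈ Ideal.span {g : MvPolynomial (Fin q) K | IsSqFreeCircuitPoly K v g} := by
  classical
  by_cases hab : a = b
  · rw [hab, binom_self]; exact zero_mem _
  by_cases hcom : ∃ i, a i ≠ 0 ∧ b i ≠ 0
  · obtain ⟨i, hai, hbi⟩ := hcom
    exact hcommon IHlow hAdeg hai hbi
  push_neg at hcom
  -- the difference vector
  set γ : Fin q → ℤ := fun i => (a i : ℤ) - (b i : ℤ) with hγdef
  have hγi : ∀ i, γ i = (a i : ℤ) - (b i : ℤ) := fun i => rfl
  have hγne : γ ≠ 0 := by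
    intro h0
    apply hab
    funext i
    have h1 : γ i = 0 := by rw [h0]; rfl
    rw [hγi i] at h1
    omega
  have hγker : (∑ i, γ i • v i) = 0 := by
    funext l
    rw [Finset.sum_apply]
    have h1 : ∀ i, (γ i • v i) l = (a i:ℤ) * v i l - (b i:ℤ) * v i l := by
      intro i
      rw [Pi.smul_apply, smul_eq_mul, hγi i]
      ring
    rw [Finset.sum_congr rfl fun i _ => h1 i, Finset.sum_sub_distrib]
    rw [← Adeg_apply a l, ← Adeg_apply b l, hAdeg]
    show Adeg v b l - Adeg v b l = (0 : Fin n → ℤ) l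
    simp
  obtain ⟨α, hαcirc, hconf1, hconf2⟩ :=
    exists_conformal_circuit ((Finset.univ.filter (fun i => γ i ≠ 0)).card) γ (le_refl _) hγne hγker
  have hpos : ∀ i, 0 < α i → (b i = 0 ∧ a i ≠ 0) := by
    intro i hi
    have hγine : γ i ≠ 0 := by
      intro h0
      have := hconf2 i h0
      omega
    have h1 : 0 ≤ α i * γ i := hconf1 i
    have hγpos : 0 < γ i := by
      rcases lt_trichotomy (γ i) 0 with h' | h' | h'
      · nlinarith
      · exact absurd h' hγine
      · exact h'
    rw [hγi i] at hγpos
    have hane : a i ≠ 0 := by omega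
    exact ⟨hcom i hane, hane⟩
  have hneg : ∀ i, α i < 0 → (a i = 0 ∧ b i ≠ 0) := by
    intro i hi
    have hγine : γ i ≠ 0 := by
      intro h0
      have := hconf2 i h0
      omega
    have h1 : 0 ≤ α i * γ i := hconf1 i
    have hγneg : γ i < 0 := by
      rcases lt_trichotomy (γ i) 0 with h' | h' | h'
      · exact h'
      · exact absurd h' hγine
      · nlinarith
    rw [hγi i] at hγneg
    have hbne : b i ≠ 0 := by omega
    have hae : a i = 0 := by
      by_contra ha
      exact hbne (hcom i ha)
    exact ⟨hae, hbne⟩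
  have huniv : (Finset.univ : Finset (Fin q)).Nonempty :=
    Finset.univ_nonempty_iff.mpr (Fin.pos_iff_nonempty.mp hq)
  by_cases h1a : ∀ i, posExp α i ≤ 1
  · -- the positive part is square-free: this is a square-free circuit, move on a
    refine hmove hhom IHlow hAdeg (posExp_negExp_rel hαcirc.2.1) ?_
      (sf_circuit_mem hαcirc (Or.inl h1a)) ?_
    · intro i
      rcases Nat.eq_zero_or_pos (posExp α i) with h0 | h0
      · omega
      · have hαpos : 0 < α i := by
          have := h0
          simp only [posExp] at this
          omega
        have h2 := (hpos i hαpos).2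
        have h3 := h1a i
        omega
    · obtain ⟨i, hi⟩ := exists_negExp_ne_zero hhom hαcirc
      have hαi : α i < 0 := by
        simp only [negExp] at hi
        omega
      exact ⟨i, hi, (hneg i hαi).2⟩
  · by_cases h1b : ∀ i, negExp α i ≤ 1
    · -- the negative part is square-free: move on b
      rw [binom_neg]
      refine neg_mem ?_
      have hsum : ∑ j, b j = ∑ j, a j := (total_deg_eq hhom hAdeg).symm
      have hsfmem : binom K (negExp α) (posExp α) ∈
          Ideal.span {g : MvPolynomial (Fin q) K | IsSqFreeCircuitPoly K v g} := by
        have h0 := sf_circuit_mem (K := K) (neg_circuit hαcirc)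
          (Or.inl (by rw [posExp_neg]; exact h1b))
        rw [posExp_neg, negExp_neg] at h0
        exact h0
      refine hmove hhom (fun a' b' hlt h' => IHlow a' b' (by omega) h') hAdeg.symm
        (posExp_negExp_rel hαcirc.2.1).symm ?_ hsfmem ?_
      · intro i
        rcases Nat.eq_zero_or_pos (negExp α i) with h0 | h0
        · omega
        · have hαneg : α i < 0 := by
            have := h0
            simp only [negExp] at this
            omega
          have h2 := (hneg i hαneg).2
          have h3 := h1b i
          omega
      · obtain ⟨i, hi⟩ := exists_posExp_ne_zero hhom hαcirc
        have hαi : 0 < α i := by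
          simp only [posExp] at hi
          omega
        exact ⟨i, hi, (hpos i hαi).2⟩
    · -- both parts have an exponent ≥ 2
      push_neg at h1a h1b
      have hp2 : 2 ≤ Finset.univ.sup (posExp α) := by
        obtain ⟨i, hi⟩ := h1a
        exact le_trans (by omega) (Finset.le_sup (Finset.mem_univ i))
      have hn2 : 2 ≤ Finset.univ.sup (negExp α) := by
        obtain ⟨i, hi⟩ := h1b
        exact le_trans (by omega) (Finset.le_sup (Finset.mem_univ i))
      rcases lt_trichotomy (Finset.univ.sup (posExp α)) (Finset.univ.sup (negExp α))
        with htri | htri | htri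
      · exact h2a α hαcirc hpos hneg hp2 htri
      · -- balanced case: use the normality bridge
        obtain ⟨p, hp⟩ : ∃ p : ℕ, Finset.univ.sup (posExp α) = p := ⟨_, rfl⟩
        rw [hp] at hp2 htri
        obtain ⟨j, _, hj⟩ := Finset.exists_mem_eq_sup Finset.univ huniv (posExp α)
        rw [hp] at hj
        obtain ⟨k0, _, hk0⟩ := Finset.exists_mem_eq_sup Finset.univ huniv (negExp α)
        rw [← htri] at hk0
        have hαj : α j = (p:ℤ) := by
          have h1 : posExp α j = p := hj.symm
          simp only [posExp] at h1
          omega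
        have hαk0 : α k0 = -(p:ℤ) := by
          have h1 : negExp α k0 = p := hk0.symm
          simp only [negExp] at h1
          omega
        have hub : ∀ i, α i ≤ (p:ℤ) := by
          refine toNat_le_of_sup (fun i => ?_) 
          rw [← hp]
          exact Finset.le_sup (Finset.mem_univ i)
        have hlb : ∀ i, -(p:ℤ) ≤ α i := by
          refine neg_toNat_le_of_sup (fun i => ?_)
          rw [htri]
          exact Finset.le_sup (Finset.mem_univ i)
        have hαjpos : 0 < α j := by omega
        have hαk0neg : α k0 < 0 := by omega
        have hbj : b j = 0 := (hpos j hαjpos).1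
        have haj : a j ≠ 0 := (hpos j hαjpos).2
        have hak0 : a k0 = 0 := (hneg k0 hαk0neg).1
        have hbk0 : b k0 ≠ 0 := (hneg k0 hαk0neg).2
        have hsumab : ∑ i, a i = ∑ i, b i := total_deg_eq hhom hAdeg
        by_cases hbk : ∃ k, b k ≠ 0 ∧ (2 ≤ b k ∨ α k = 0)
        · obtain ⟨k, hbkne, hsp⟩ := hbk
          have hjk : j ≠ k := by
            intro h0
            rw [← h0] at hbkne
            exact hbkne hbj
          obtain ⟨u, hu, huj, huk⟩ := bridge_construct hnorm hp2 hub hlb hαcirc.2.1 hjk hαj hbj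
            hbkne hsp (fun i hi => (hneg i hi).2)
          have hadu : Adeg v a = Adeg v u := by rw [hAdeg, hu]
          have hsumu : ∑ i, u i = ∑ i, a i := by
            rw [total_deg_eq hhom hadu.symm]
          rw [binom_trans a u b]
          refine add_mem (hcommon IHlow hadu haj huj) ?_
          exact hcommon (fun a' b' hlt h' => IHlow a' b' (by omega) h') hu huk hbkne
        · push_neg at hbk
          by_cases hak : ∃ k', a k' ≠ 0 ∧ (2 ≤ a k' ∨ α k' = 0)
          · obtain ⟨k', hakne, hsp⟩ := hak
            have hub' : ∀ i, (-α) i ≤ (p:ℤ) := by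
              intro i
              have := hlb i
              simp only [Pi.neg_apply]
              omega
            have hlb' : ∀ i, -(p:ℤ) ≤ (-α) i := by
              intro i
              have := hub i
              simp only [Pi.neg_apply]
              omega
            have hjk' : k0 ≠ k' := by
              intro h0
              rw [← h0] at hakne
              exact hakne hak0
            have hαk0' : (-α) k0 = (p:ℤ) := by
              simp only [Pi.neg_apply]
              omega
            have hsp' : 2 ≤ a k' ∨ (-α) k' = 0 := by
              rcases hsp with h' | h'
              · exact Or.inl h'
              · exact Or.inr (by simp only [Pi.neg_apply]; omega)
            obtain ⟨u, hu, huk0, huk'⟩ := bridge_construct hnorm hp2 hub' hlb'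
              (neg_circuit hαcirc).2.1 hjk' hαk0' hak0 hakne hsp'
              (fun i hi => (hpos i (by simp only [Pi.neg_apply] at hi; omega)).2)
            -- u has Adeg v u = Adeg v a, u k0 ≠ 0 (k0 in supp b), u k' ≠ 0 (k' in supp a)
            have hadu : Adeg v a = Adeg v u := hu.symm
            have hsumu : ∑ i, u i = ∑ i, a i := by
              rw [total_deg_eq hhom hadu.symm]
            rw [binom_trans a u b]
            refine add_mem (hcommon IHlow hadu hakne huk') ?_
            refine hcommon (fun a' b' hlt h' => IHlow a' b' (by omega) h')
              (hu.trans hAdeg) huk0 hbk0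
          · -- impossible: α would be p times a primitive vector
            exfalso
            push_neg at hak
            have hsupadisj : ∀ i, α i = 0 → (a i = 0 ∧ b i = 0) := by
              intro i hi
              constructor
              · by_contra h0
                exact ((hak i h0).2) hi
              · by_contra h0
                exact ((hbk i h0).2) hi
            set βz : Fin q → ℤ := fun i => (p:ℤ) * γ i - α i with hβzdef
            have hβzi : ∀ i, βz i = (p:ℤ) * γ i - α i := fun i => rfl
            by_cases hβz0 : βz = 0
            · -- α = p • γ : contradicts gcd = 1
              have hdvd : (p:ℤ) ∣ Finset.univ.gcd α := by
                refine Finset.dvd_gcd fun i _ => ?_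
                have h1 : βz i = 0 := by rw [hβz0]; rfl
                rw [hβzi i] at h1
                exact ⟨γ i, by omega⟩
              rw [hαcirc.2.2.2] at hdvd
              have : (p:ℤ) = 1 := Int.eq_one_of_dvd_one (by positivity) hdvd
              omega
            · -- βz is a smaller-support kernel vector: contradicts minimality
              have hβzker : ∀ l, ∑ i, (βz i:ℚ) * (v i l:ℚ) = 0 := by
                intro l
                have h1 : ∑ i, βz i * v i l = 0 := by
                  have hg : ∑ i, γ i * v i l = 0 := by
                    have := congrFun hγker l
                    rw [Finset.sum_apply] at this
                    simpa [smul_eq_mul] using this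
                  have hA : ∑ i, α i * v i l = 0 := by
                    have := congrFun hαcirc.2.1 l
                    rw [Finset.sum_apply] at this
                    simpa [smul_eq_mul] using this
                  calc ∑ i, βz i * v i l
                      = (p:ℤ) * ∑ i, γ i * v i l - ∑ i, α i * v i l := by
                        rw [Finset.mul_sum, ← Finset.sum_sub_distrib]
                        exact Finset.sum_congr rfl fun i _ => by rw [hβzi i]; ring
                    _ = 0 := by rw [hg, hA]; ring
                have h2 : ((∑ i, βz i * v i l : ℤ):ℚ) = 0 := by rw [h1]; simp
                push_cast at h2
                exact h2
              have hmin := hαcirc.2.2.1 (fun i => (βz i : ℚ)) (qker_of_apply hβzker)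
                (by
                  intro h0
                  apply hβz0
                  funext i
                  have : ((βz i : ℚ)) = 0 := congrFun h0 i
                  exact_mod_cast this)
                (by
                  intro i hi
                  simp only [Function.mem_support] at hi ⊢
                  intro hαi
                  apply hi
                  have h1 := hsupadisj i hαi
                  have h2 : γ i = 0 := by rw [hγi i]; omega
                  rw [hβzi i] at *
                  rw [h2, hαi]
                  push_cast
                  ring)
              -- but j is in the support of α and not in the support of βz
              have hβzj : βz j = 0 := by
                rw [hβzi j]
                have haj1 : a j = 1 := by
                  have := (hak j haj).1
                  omega
                have hγj : γ j = 1 := by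
                  rw [hγi j, haj1, hbj]
                  ring
                rw [hγj, hαj]
                ring
              have hjmem : j ∈ Function.support α := by
                simp only [Function.mem_support]
                omega
              rw [← hmin] at hjmem
              simp only [Function.mem_support] at hjmem
              apply hjmem
              rw [hβzj]
              push_cast
              ring
      · exact h2b α hαcirc hpos hneg hn2 htri


lemma chain_succ {v : Fin q → Fin n → ℤ} {r : ℕ} {u w : Fin q → ℕ} :
    Chain v (r+1) u w ↔ ∃ m, Step v u m ∧ Chain v r m w := Iff.rfl

lemma eq_of_le_of_sum_le {c a : Fin q → ℕ} (hca : ∀ i, c i ≤ a i)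
    (hs : (∑ i, a i) ≤ ∑ i, c i) : c = a := by
  funext i
  by_contra h
  have hlt : c i < a i := lt_of_le_of_ne (hca i) h
  have := sum_lt_of_lt hca hlt
  omega

set_option maxHeartbeats 1000000 in
theorem master {v : Fin q → Fin n → ℤ} (hq : 0 < q) (hhom : IsHomogeneousConfig v)
    (hnorm : IsNormalConfig v)
    (hmode : ConnectorCondition K v ∨
      toricIdeal K v ≤ Ideal.span {g : MvPolynomial (Fin q) K | IsCircuitPoly K v g}) :
    ∀ (M : ℕ) (a b : Fin q → ℕ), (∑ i, a i) ≤ M → Adeg v a = Adeg v b →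
      binom K a b ∈ Ideal.span {g : MvPolynomial (Fin q) K | IsSqFreeCircuitPoly K v g} := by
  intro M
  induction M with
  | zero =>
    intro a b hs hAdeg
    have ha0 : a = 0 := by
      funext i
      have : a i ≤ ∑ j, a j := Finset.single_le_sum (fun j _ => Nat.zero_le _) (Finset.mem_univ i)
      show a i = 0
      omega
    have hsum := total_deg_eq hhom hAdeg
    have hb0 : b = 0 := by
      funext i
      have : b i ≤ ∑ j, b j := Finset.single_le_sum (fun j _ => Nat.zero_le _) (Finset.mem_univ i)
      show b i = 0
      omega
    rw [ha0, hb0, binom_self]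
    exact zero_mem _
  | succ M ihM =>
    rcases hmode with hconn | hJC
    · -- connector-condition mode
      intro a b hs hAdeg
      have IHlow : ∀ a' b' : Fin q → ℕ, (∑ j, a' j) < (∑ j, a j) → Adeg v a' = Adeg v b' →
          binom K a' b' ∈ Ideal.span {g : MvPolynomial (Fin q) K | IsSqFreeCircuitPoly K v g} :=
        fun a' b' hlt h' => ihM a' b' (by omega) h'
      refine core hq hhom hnorm IHlow hAdeg ?_ ?_
      · intro α hα hpos hneg hp2 hlt
        obtain ⟨f, ⟨c, d, hfeq, hftoric, hcsq, hcsupp, hmeet⟩, hfspan⟩ := hconn α hα hlt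
        have hcd : Adeg v c = Adeg v d := toric_rel (hfeq ▸ hftoric)
        refine hmove hhom IHlow hAdeg hcd ?_ (hfeq ▸ hfspan) ?_
        · intro i
          rcases Nat.eq_zero_or_pos (c i) with h0 | h0
          · omega
          · have hpe : posExp α i ≠ 0 := hcsupp i (by omega)
            have hαpos : 0 < α i := by
              simp only [posExp] at hpe
              omega
            have := (hpos i hαpos).2
            have := hcsq i
            omega
        · obtain ⟨i, hdi, hni⟩ := hmeet
          have hαneg : α i < 0 := by
            simp only [negExp] at hni
            omega
          exact ⟨i, hdi, (hneg i hαneg).2⟩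
      · intro α hα hpos hneg hn2 hlt
        have hconn' := hconn (-α) (neg_circuit hα)
          (by rw [posExp_neg, negExp_neg]; exact hlt)
        obtain ⟨f, ⟨c, d, hfeq, hftoric, hcsq, hcsupp, hmeet⟩, hfspan⟩ := hconn'
        have hcd : Adeg v c = Adeg v d := toric_rel (hfeq ▸ hftoric)
        have hsum : ∑ j, b j = ∑ j, a j := (total_deg_eq hhom hAdeg).symm
        rw [binom_neg]
        refine neg_mem ?_
        refine hmove hhom (fun a' b' hlt' h' => ihM a' b' (by omega) h') hAdeg.symm hcd ?_
          (hfeq ▸ hfspan) ?_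
        · intro i
          rcases Nat.eq_zero_or_pos (c i) with h0 | h0
          · omega
          · have hpe : posExp (-α) i ≠ 0 := hcsupp i (by omega)
            have hαneg : α i < 0 := by
              rw [posExp_neg] at hpe
              simp only [negExp] at hpe
              omega
            have := (hneg i hαneg).2
            have := hcsq i
            omega
        · obtain ⟨i, hdi, hni⟩ := hmeet
          rw [negExp_neg] at hni
          have hαpos : 0 < α i := by
            simp only [posExp] at hni
            omega
          exact ⟨i, hdi, (hpos i hαpos).2⟩
    · -- circuit-generation mode: use chains
      have key : ∀ (r : ℕ) (a b : Fin q → ℕ), (∑ i, a i) ≤ M + 1 → Adeg v a = Adeg v b →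
          Chain v r a b →
          binom K a b ∈ Ideal.span {g : MvPolynomial (Fin q) K | IsSqFreeCircuitPoly K v g} := by
        intro r
        induction r with
        | zero =>
          intro a b _ _ hch
          have : a = b := hch
          rw [this, binom_self]
          exact zero_mem _
        | succ r ihr =>
          intro a b hs hAdeg hch
          have IHlow : ∀ a' b' : Fin q → ℕ, (∑ j, a' j) < (∑ j, a j) → Adeg v a' = Adeg v b' →
              binom K a' b' ∈ Ideal.span {g : MvPolynomial (Fin q) K | IsSqFreeCircuitPoly K v g} :=
            fun a' b' hlt h' => ihM a' b' (by omega) h'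
          refine core hq hhom hnorm IHlow hAdeg ?_ ?_
          · -- light side on a
            intro α hα hpos hneg hp2 hlt
            obtain ⟨d, hdc, k, hdk, hnk⟩ := connector_construct hhom hnorm hα (le_of_lt hlt) hq
            set c : Fin q → ℕ := fun i => min 1 (posExp α i) with hcdef
            have hcd : Adeg v c = Adeg v d := hdc.symm
            have hca : ∀ i, c i ≤ a i := by
              intro i
              rcases Nat.eq_zero_or_pos (posExp α i) with h0 | h0
              · show min 1 (posExp α i) ≤ a i
                omega
              · have hαpos : 0 < α i := by
                  simp only [posExp] at h0
                  omega
                have := (hpos i hαpos).2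
                show min 1 (posExp α i) ≤ a i
                omega
            have hαk : α k < 0 := by
              simp only [negExp] at hnk
              omega
            have hmeet : ∃ i, d i ≠ 0 ∧ b i ≠ 0 := ⟨k, hdk, (hneg k hαk).2⟩
            rcases Nat.lt_or_ge (∑ i, c i) (∑ i, a i) with hδ | hδ
            · have hf : binom K c d ∈
                  Ideal.span {g : MvPolynomial (Fin q) K | IsSqFreeCircuitPoly K v g} :=
                ihM c d (by omega) hcd
              exact hmove hhom IHlow hAdeg hcd hca hf hmeet
            · -- a is square-free: use the first step of the chain
              have hceqa : c = a := eq_of_le_of_sum_le hca hδ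
              have hasq : ∀ i, a i ≤ 1 := by
                intro i
                have : c i = a i := by rw [hceqa]
                show a i ≤ 1
                rw [← this]
                show min 1 (posExp α i) ≤ 1
                omega
              obtain ⟨m, hstep, hch'⟩ := hch
              obtain ⟨β, e, hβ, haeq, hmeq⟩ := hstep
              have hsf : ∀ i, posExp β i ≤ 1 := by
                intro i
                have h1 : a i = e i + posExp β i := by rw [haeq]; rfl
                have := hasq i
                omega
              have h1 : binom K a m = X K e * binom K (posExp β) (negExp β) := by
                rw [X_mul_binom, ← haeq, ← hmeq]
              have hmem1 : binom K a m ∈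
                  Ideal.span {g : MvPolynomial (Fin q) K | IsSqFreeCircuitPoly K v g} := by
                rw [h1]
                exact Ideal.mul_mem_left _ _ (sf_circuit_mem hβ (Or.inl hsf))
              have hadm : Adeg v a = Adeg v m := by
                rw [haeq, hmeq, Adeg_add, Adeg_add, posExp_negExp_rel hβ.2.1]
              have hsm : ∑ i, m i ≤ M + 1 := by
                rw [← total_deg_eq hhom hadm]
                exact hs
              have hmem2 : binom K m b ∈
                  Ideal.span {g : MvPolynomial (Fin q) K | IsSqFreeCircuitPoly K v g} :=
                ihr m b hsm (hadm.symm.trans hAdeg) hch'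
              rw [binom_trans a m b]
              exact add_mem hmem1 hmem2
          · -- light side on b
            intro α hα hpos hneg hn2 hlt
            obtain ⟨d, hdc, k, hdk, hnk⟩ := connector_construct hhom hnorm (neg_circuit hα)
              (by rw [posExp_neg, negExp_neg]; exact le_of_lt hlt) hq
            rw [negExp_neg] at hnk
            set c : Fin q → ℕ := fun i => min 1 (negExp α i) with hcdef
            have hcd : Adeg v c = Adeg v d := by
              have h0 : (fun i => min 1 (posExp (-α) i)) = c := rfl
              rw [h0] at hdc
              exact hdc.symm
            have hsum : ∑ j, b j = ∑ j, a j := (total_deg_eq hhom hAdeg).symm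
            have hcb : ∀ i, c i ≤ b i := by
              intro i
              rcases Nat.eq_zero_or_pos (negExp α i) with h0 | h0
              · show min 1 (negExp α i) ≤ b i
                omega
              · have hαneg : α i < 0 := by
                  simp only [negExp] at h0
                  omega
                have := (hneg i hαneg).2
                show min 1 (negExp α i) ≤ b i
                omega
            have hαk : 0 < α k := by
              simp only [posExp] at hnk
              omega
            have hmeet : ∃ i, d i ≠ 0 ∧ a i ≠ 0 := ⟨k, hdk, (hpos k hαk).2⟩
            rw [binom_neg]
            refine neg_mem ?_
            rcases Nat.lt_or_ge (∑ i, c i) (∑ i, b i) with hδ | hδ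
            · have hf : binom K c d ∈
                  Ideal.span {g : MvPolynomial (Fin q) K | IsSqFreeCircuitPoly K v g} :=
                ihM c d (by omega) hcd
              exact hmove hhom (fun a' b' hlt' h' => ihM a' b' (by omega) h') hAdeg.symm hcd hcb hf hmeet
            · -- b is square-free: use the last step of the chain
              have hceqb : c = b := eq_of_le_of_sum_le hcb hδ
              have hbsq : ∀ i, b i ≤ 1 := by
                intro i
                have : c i = b i := by rw [hceqb]
                show b i ≤ 1
                rw [← this]
                show min 1 (negExp α i) ≤ 1
                omega
              obtain ⟨m, hch', hstep⟩ := Chain.last hch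
              obtain ⟨β, e, hβ, hmeq, hbeq⟩ := hstep
              have hsf : ∀ i, negExp β i ≤ 1 := by
                intro i
                have h1 : b i = e i + negExp β i := by rw [hbeq]; rfl
                have := hbsq i
                omega
              have h1 : binom K m b = X K e * binom K (posExp β) (negExp β) := by
                rw [X_mul_binom, ← hmeq, ← hbeq]
              have hmem1 : binom K b m ∈
                  Ideal.span {g : MvPolynomial (Fin q) K | IsSqFreeCircuitPoly K v g} := by
                rw [binom_neg]
                refine neg_mem ?_
                rw [h1]
                exact Ideal.mul_mem_left _ _ (sf_circuit_mem hβ (Or.inr hsf))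
              have hadm : Adeg v m = Adeg v b := by
                rw [hmeq, hbeq, Adeg_add, Adeg_add, posExp_negExp_rel hβ.2.1]
              have hmem2 : binom K m a ∈
                  Ideal.span {g : MvPolynomial (Fin q) K | IsSqFreeCircuitPoly K v g} := by
                rw [binom_neg]
                refine neg_mem ?_
                refine ihr a m hs (hAdeg.trans hadm.symm) hch'
              rw [binom_trans b m a]
              exact add_mem hmem1 hmem2
      intro a b hs hAdeg
      obtain ⟨r, hr⟩ := conn_of_mem_JC (hJC (toric_gen_mem hAdeg))
      exact key r a b hs hAdeg hr


/-! ### assembly -/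

lemma JSF_le_toric {v : Fin q → Fin n → ℤ} :
    Ideal.span {g : MvPolynomial (Fin q) K | IsSqFreeCircuitPoly K v g} ≤ toricIdeal K v := by
  rw [Ideal.span_le]
  rintro f ⟨α, hα, rfl, hsq⟩
  exact toric_gen_mem (posExp_negExp_rel hα.2.1)

lemma toric_le_JSF {v : Fin q → Fin n → ℤ} (hq : 0 < q) (hhom : IsHomogeneousConfig v)
    (hnorm : IsNormalConfig v)
    (hmode : ConnectorCondition K v ∨
      toricIdeal K v ≤ Ideal.span {g : MvPolynomial (Fin q) K | IsCircuitPoly K v g}) :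
    toricIdeal K v ≤ Ideal.span {g : MvPolynomial (Fin q) K | IsSqFreeCircuitPoly K v g} := by
  rw [toricIdeal, Ideal.span_le]
  rintro f ⟨a, b, hrel, rfl⟩
  exact master hq hhom hnorm hmode (∑ i, a i) a b (le_refl _) hrel

lemma span_finset_of_span_set {R : Type*} [CommRing R] {T : Set R} {I : Ideal R} (hfg : I.FG)
    (hspan : Ideal.span T = I) : ∃ S : Finset R, ↑S ⊆ T ∧ Ideal.span (S : Set R) = I := by
  classical
  obtain ⟨G, hG⟩ := hfg
  have hmem : ∀ g : {x // x ∈ G}, (g : R) ∈ Submodule.span R T := fun g => by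
    rw [show Submodule.span R T = Ideal.span T from rfl, hspan, ← hG]
    exact Ideal.subset_span (Finset.mem_coe.mpr g.2)
  choose F hFsub hFmem using fun g : {x // x ∈ G} =>
    Submodule.mem_span_finite_of_mem_span (hmem g)
  refine ⟨G.attach.biUnion (fun g => F g), ?_, ?_⟩
  · intro x hx
    obtain ⟨g, _, hx⟩ := Finset.mem_biUnion.mp (Finset.mem_coe.mp hx)
    exact hFsub g (Finset.mem_coe.mpr hx)
  · apply le_antisymm
    · rw [← hspan]
      refine Ideal.span_mono ?_
      intro x hx
      obtain ⟨g, _, hx⟩ := Finset.mem_biUnion.mp (Finset.mem_coe.mp hx)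
      exact hFsub g (Finset.mem_coe.mpr hx)
    · rw [← hG, Ideal.span_le]
      intro g hg
      have h1 : g ∈ Submodule.span R ((F ⟨g, Finset.mem_coe.mp hg⟩ : Finset R) : Set R) :=
        hFmem ⟨g, Finset.mem_coe.mp hg⟩
      refine Submodule.span_mono ?_ h1
      intro x hx
      refine Finset.mem_coe.mpr (Finset.mem_biUnion.mpr ⟨⟨g, Finset.mem_coe.mp hg⟩,
        Finset.mem_attach _ _, Finset.mem_coe.mp hx⟩)

lemma connector_exists {v : Fin q → Fin n → ℤ} (hq : 0 < q) (hhom : IsHomogeneousConfig v)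
    (hnorm : IsNormalConfig v)
    (hsf : toricIdeal K v ≤ Ideal.span {g : MvPolynomial (Fin q) K | IsSqFreeCircuitPoly K v g}) :
    ConnectorCondition K v := by
  intro α hα hlt
  obtain ⟨d, hdc, k, hdk, hnk⟩ := connector_construct hhom hnorm hα (le_of_lt hlt) hq
  have htoric : binom K (fun i => min 1 (posExp α i)) d ∈ toricIdeal K v :=
    toric_gen_mem hdc.symm
  have hc1 : ∀ i, min 1 (posExp α i) ≤ 1 := fun i => by omega
  have hc2 : ∀ i, min 1 (posExp α i) ≠ 0 → posExp α i ≠ 0 := by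
    intro i hi h0
    apply hi
    omega
  exact ⟨binom K (fun i => min 1 (posExp α i)) d,
    ⟨fun i => min 1 (posExp α i), d, rfl, htoric, hc1, hc2, ⟨k, hdk, hnk⟩⟩, hsf htoric⟩

end Toric

/-- **Theorem (Martínez-Bernal–Villarreal).** For a homogeneous normal configuration,
(a) `I_A` generated by a finite set of circuits, (b) generated by a finite set of
circuits with a square-free term, and (c) every unbalanced circuit has a connector
which is a `K[T]`-linear combination of circuits with a square-free term, are equivalent. -/
theorem toricIdeal_tfae_circuits (K : Type*) [Field K] {n q : ℕ}
    (hn : 0 < n) (hq : 0 < q) (v : Fin q → Fin n → ℤ)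
    (hhom : IsHomogeneousConfig v) (hnorm : IsNormalConfig v) :
    List.TFAE [GenByCircuits K v, GenBySqFreeCircuits K v, ConnectorCondition K v] := by
  tfae_have 2 → 1 := by
    rintro ⟨S, hS, hspan⟩
    exact ⟨S, fun f hf => (hS f hf).imp (fun α ⟨h1, h2, _⟩ => ⟨h1, h2⟩), hspan⟩
  tfae_have 1 → 3 := by
    rintro ⟨S, hS, hspan⟩
    have hJC : toricIdeal K v ≤
        Ideal.span {g : MvPolynomial (Fin q) K | IsCircuitPoly K v g} := by
      rw [← hspan]
      exact Ideal.span_mono (fun f hf => hS f hf)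
    exact Toric.connector_exists hq hhom hnorm
      (Toric.toric_le_JSF hq hhom hnorm (Or.inr hJC))
  tfae_have 3 → 2 := by
    intro hc
    have heq : Ideal.span {g : MvPolynomial (Fin q) K | IsSqFreeCircuitPoly K v g} =
        toricIdeal K v :=
      le_antisymm Toric.JSF_le_toric (Toric.toric_le_JSF hq hhom hnorm (Or.inl hc))
    have hfg : (toricIdeal K v).FG := IsNoetherian.noetherian (toricIdeal K v)
    obtain ⟨S, hsub, hspan⟩ := Toric.span_finset_of_span_set hfg heq
    exact ⟨S, fun f hf => hsub (Finset.mem_coe.mpr hf), hspan⟩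
  tfae_finish
end

section
/- Let A = (v_1, …, v_q) ⊂ ℤ^n be a homogeneous normal configuration. If the toric ideal I_A is generated by a finite set of circuits of I_A each having a square-free term, then every unbalanced circuit of I_A has a connector which is a K[T_1, …, T_q]-linear combination of circuits of I_A having a square-free term. -/
open MvPolynomial

/-- Elements of the additive monoid closure of the range of `v` are `ℕ`-combinations. -/
lemma mem_closure_range_exists {n q : ℕ} (v : Fin q → Fin n → ℤ) (x : Fin n → ℤ)
    (hx : x ∈ AddSubmonoid.closure (Set.range v)) :
    ∃ d : Fin q → ℕ, x = ∑ i, d i • v i := by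
  classical
  induction hx using AddSubmonoid.closure_induction with
  | mem y hy =>
      obtain ⟨i, rfl⟩ := hy
      refine ⟨fun k => if k = i then 1 else 0, ?_⟩
      simp [ite_smul, Finset.sum_ite_eq']
  | zero => exact ⟨0, by simp⟩
  | add x y _ _ hx hy =>
      obtain ⟨d1, rfl⟩ := hx
      obtain ⟨d2, rfl⟩ := hy
      exact ⟨d1 + d2, by simp [add_smul, Finset.sum_add_distrib]⟩

/-- If the toric ideal of a homogeneous normal configuration is generated by a finite set
of circuits with a square-free term, then every unbalanced circuit has a connector which is
a `K[T]`-linear combination of circuits with a square-free term. -/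
theorem genBySqFreeCircuits_imp_connectorCondition (K : Type*) [Field K] {n q : ℕ}
    (hn : 0 < n) (hq : 0 < q) (v : Fin q → Fin n → ℤ)
    (hhom : IsHomogeneousConfig v) (hnorm : IsNormalConfig v)
    (h : GenBySqFreeCircuits K v) : ConnectorCondition K v := by
  classical
  intro α hα hub
  obtain ⟨S, hS, hspan⟩ := h
  set a : Fin q → ℕ := posExp α with ha
  set b : Fin q → ℕ := negExp α with hb
  -- choose j with b j maximal
  obtain ⟨j, -, hjsup⟩ :=
    Finset.exists_mem_eq_sup (Finset.univ : Finset (Fin q)) ⟨⟨0, hq⟩, Finset.mem_univ _⟩ b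
  have hbj : 0 < b j := by
    have h1 : Finset.univ.sup a < b j := hjsup ▸ hub
    omega
  have haj : a j = 0 := by
    have h1 : 0 < (-α j).toNat := hbj
    simp only [ha, posExp]
    omega
  have hdisj : ∀ i, a i ≠ 0 → b i = 0 := by
    intro i hi
    simp only [ha, posExp] at hi
    simp only [hb, negExp]
    omega
  have hale : ∀ i, a i ≤ b j := by
    intro i
    have h1 : a i ≤ Finset.univ.sup a := Finset.le_sup (Finset.mem_univ i)
    have h2 : Finset.univ.sup a < b j := hjsup ▸ hub
    omega
  -- the square-free exponent
  set c : Fin q → ℕ := fun i => if a i = 0 then 0 else 1 with hc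
  -- the key relation ∑ a v = ∑ b v
  have hab : (∑ i, a i • v i) = ∑ i, b i • v i := by
    have h0 : (∑ i, α i • v i) = 0 := hα.2.1
    have hsub : (∑ i, a i • v i) - (∑ i, b i • v i) = ∑ i, α i • v i := by
      rw [← Finset.sum_sub_distrib]
      refine Finset.sum_congr rfl fun i _ => ?_
      have h1 : (a i : ℤ) - (b i : ℤ) = α i := by
        simp only [ha, hb, posExp, negExp]; omega
      calc a i • v i - b i • v i = ((a i : ℤ)) • v i - ((b i : ℤ)) • v i := by
            rw [natCast_zsmul, natCast_zsmul]
        _ = ((a i : ℤ) - (b i : ℤ)) • v i := (sub_smul _ _ _).symm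
        _ = α i • v i := by rw [h1]
    exact sub_eq_zero.mp (hsub.trans h0)
  -- the vector x = ∑ c v - v j
  set x : Fin n → ℤ := (∑ i, c i • v i) - v j with hx
  have hmem : ∀ i, v i ∈ AddSubgroup.closure (Set.range v) :=
    fun i => AddSubgroup.subset_closure ⟨i, rfl⟩
  have hxZ : x ∈ AddSubgroup.closure (Set.range v) :=
    AddSubgroup.sub_mem _
      (AddSubgroup.sum_mem _ fun i _ => AddSubgroup.nsmul_mem _ (hmem i) _) (hmem j)
  -- applying sums of scaled vectors at a coordinate
  have hsum_app : ∀ (w : Fin q → ℕ) (l : Fin n),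
      (∑ i, w i • v i) l = ∑ i, (w i : ℤ) * v i l := by
    intro w l
    rw [Finset.sum_apply]
    exact Finset.sum_congr rfl fun i _ => by
      rw [Pi.smul_apply, nsmul_eq_mul]
  -- real cone coefficients
  set B : ℝ := (b j : ℝ) with hB
  have hBpos : 0 < B := by rw [hB]; exact_mod_cast hbj
  set e : Fin q → ℝ :=
    fun i => (c i : ℝ) - (a i : ℝ) / B + (b i : ℝ) / B - (if i = j then 1 else 0) with he
  have he0 : ∀ i, 0 ≤ e i := by
    intro i
    by_cases hij : i = j
    · subst hij
      have hci : c i = 0 := by simp [hc, haj]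
      simp [he, hci, haj, div_self hBpos.ne']
      exact (div_self hBpos.ne').ge
    · by_cases hai : a i = 0
      · have hci : c i = 0 := by simp [hc, hai]
        have hnn : (0:ℝ) ≤ (b i : ℝ) / B := div_nonneg (by positivity) hBpos.le
        simp only [he, hci, hai, if_neg hij]
        push_cast
        rw [zero_div]
        linarith
      · have hci : c i = 1 := by simp [hc, hai]
        have hbi : b i = 0 := hdisj i hai
        have h1 : (a i : ℝ) ≤ B := by rw [hB]; exact_mod_cast hale i
        have h2 : (a i : ℝ) / B ≤ 1 := by rw [div_le_one hBpos]; exact h1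
        simp only [he, hci, hbi, if_neg hij]
        push_cast
        rw [zero_div]
        linarith
  have habl : ∀ l, (∑ i, (a i : ℝ) * (v i l : ℝ)) = ∑ i, (b i : ℝ) * (v i l : ℝ) := by
    intro l
    have h1 := congrFun hab l
    rw [hsum_app, hsum_app] at h1
    exact_mod_cast h1
  have hxe : ∀ l, ((x l : ℤ) : ℝ) = ∑ i, e i * (v i l : ℝ) := by
    intro l
    have hxl : ((x l : ℤ) : ℝ) = (∑ i, (c i : ℝ) * (v i l : ℝ)) - (v j l : ℝ) := by
      have : x l = (∑ i, (c i : ℤ) * v i l) - v j l := by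
        rw [hx, Pi.sub_apply, hsum_app]
      rw [this]
      push_cast
      ring
    have hvj : (v j l : ℝ) = ∑ i, (if i = j then (1:ℝ) else 0) * (v i l : ℝ) := by
      simp [ite_mul, Finset.sum_ite_eq']
    have hexp : ∑ i, e i * (v i l : ℝ) =
        (∑ i, (c i : ℝ) * (v i l : ℝ)) - (∑ i, (a i : ℝ) * (v i l : ℝ)) / B
          + (∑ i, (b i : ℝ) * (v i l : ℝ)) / B - (v j l : ℝ) := by
      rw [Finset.sum_div, Finset.sum_div, ← Finset.sum_sub_distrib, ← Finset.sum_add_distrib,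
        hvj, ← Finset.sum_sub_distrib]
      exact Finset.sum_congr rfl fun i _ => by simp only [he]; ring
    rw [hexp, habl l, hxl]
    ring
  -- normality gives x ∈ ℕA
  have hxN : x ∈ AddSubmonoid.closure (Set.range v) :=
    (hnorm x).mpr ⟨hxZ, e, he0, hxe⟩
  obtain ⟨d', hd'⟩ := mem_closure_range_exists v x hxN
  set d : Fin q → ℕ := fun i => d' i + if i = j then 1 else 0 with hd
  have hcd : (∑ i, c i • v i) = ∑ i, d i • v i := by
    have h1 : ∑ i, d i • v i = (∑ i, d' i • v i) + v j := by
      simp only [hd, add_smul, Finset.sum_add_distrib, ite_smul, one_smul, zero_smul,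
        Finset.sum_ite_eq', Finset.mem_univ, if_true]
    rw [h1, ← hd', hx]
    abel
  refine ⟨binom K c d, ⟨c, d, rfl, ?_, ?_, ?_, ⟨j, ?_, ?_⟩⟩, ?_⟩
  · exact Ideal.subset_span ⟨c, d, hcd, rfl⟩
  · intro i; simp only [hc]; split <;> omega
  · intro i hi
    by_cases h' : a i = 0
    · simp [hc, h'] at hi
    · exact h'
  · simp [hd]
  · omega
  · have hsub : toricIdeal K v ≤
        Ideal.span { g : MvPolynomial (Fin q) K | IsSqFreeCircuitPoly K v g } := by
      rw [← hspan]
      exact Ideal.span_mono fun g hg => hS g hg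
    exact hsub (Ideal.subset_span ⟨c, d, hcd, rfl⟩)
end

section
/- Let A = (v_1, …, v_q) ⊂ ℤ^n be a homogeneous normal configuration. If every unbalanced circuit of I_A has a connector which is a K[T_1, …, T_q]-linear combination of circuits of I_A having a square-free term, then the toric ideal I_A is generated by a finite set of circuits of I_A. -/
open MvPolynomial

section Aux

open MvPolynomial

variable {K : Type*} [Field K] {n q : ℕ} {v : Fin q → Fin n → ℤ}

lemma symm_add {q : ℕ} (a b : Fin q → ℕ) :
    Finsupp.equivFunOnFinite.symm (a + b) =
      Finsupp.equivFunOnFinite.symm a + Finsupp.equivFunOnFinite.symm b := by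
  ext i; simp

noncomputable def mon (K : Type*) [Field K] {q : ℕ} (a : Fin q → ℕ) : MvPolynomial (Fin q) K :=
  monomial (Finsupp.equivFunOnFinite.symm a) 1

lemma mon_mul (K : Type*) [Field K] {q : ℕ} (a b : Fin q → ℕ) :
    mon K a * mon K b = mon K (a + b) := by
  simp only [mon, monomial_mul, one_mul, symm_add]

lemma binom_eq_mon (K : Type*) [Field K] {q : ℕ} (a b : Fin q → ℕ) :
    binom K a b = mon K a - mon K b := rfl

/-- The kernel condition on an integer vector. -/
def kerVec (v : Fin q → Fin n → ℤ) (γ : Fin q → ℤ) : Prop := (∑ i, γ i • v i) = 0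

/-- The binomial attached to an integer vector. -/
noncomputable def gpoly (K : Type*) [Field K] {q : ℕ} (γ : Fin q → ℤ) :
    MvPolynomial (Fin q) K := binom K (posExp γ) (negExp γ)

/-- Degree of an integer vector. -/
def degv {q : ℕ} (γ : Fin q → ℤ) : ℕ := ∑ i, posExp γ i

/-- The ideal generated by circuits. -/
noncomputable def circId (K : Type*) [Field K] {n q : ℕ} (v : Fin q → Fin n → ℤ) :
    Ideal (MvPolynomial (Fin q) K) :=
  Ideal.span { f | IsCircuitPoly K v f }

lemma sumN_apply (a : Fin q → ℕ) (l : Fin n) :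
    (∑ i, a i • v i) l = ∑ i, (a i : ℤ) * v i l := by
  rw [Finset.sum_apply]
  exact Finset.sum_congr rfl fun i _ => by simp [nsmul_eq_mul]

lemma sumZ_apply (γ : Fin q → ℤ) (l : Fin n) :
    (∑ i, γ i • v i) l = ∑ i, γ i * v i l := by
  rw [Finset.sum_apply]
  exact Finset.sum_congr rfl fun i _ => by simp [smul_eq_mul]

lemma factor_binom (u w : Fin q → ℕ) :
    binom K u w = mon K (fun i => min (u i) (w i)) * gpoly K (fun i => (u i : ℤ) - w i) := by
  rw [gpoly, binom_eq_mon, binom_eq_mon, mul_sub, mon_mul, mon_mul]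
  congr 2
  · funext i; simp only [Pi.add_apply, posExp]; omega
  · funext i; simp only [Pi.add_apply, negExp]; omega

lemma relation_of_kerVec (hγ : kerVec v γ) :
    (∑ i, posExp γ i • v i) = (∑ i, negExp γ i • v i) := by
  funext l
  have h0 : (∑ i, γ i * v i l) = 0 := by
    rw [← sumZ_apply]; rw [kerVec] at hγ; rw [hγ]; rfl
  rw [sumN_apply, sumN_apply, ← sub_eq_zero, ← Finset.sum_sub_distrib, ← h0]
  exact Finset.sum_congr rfl fun i _ => by
    have : ((posExp γ i : ℤ)) - negExp γ i = γ i := by simp only [posExp, negExp]; omega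
    rw [← this]; ring

lemma kerVec_of_relation {a b : Fin q → ℕ}
    (h : (∑ i, a i • v i) = (∑ i, b i • v i)) :
    kerVec v (fun i => (a i : ℤ) - b i) := by
  funext l
  have h' := congrFun h l
  rw [sumN_apply, sumN_apply] at h'
  rw [sumZ_apply]
  simp only [Pi.zero_apply]
  rw [← sub_eq_zero] at h'
  rw [← h', ← Finset.sum_sub_distrib]
  exact Finset.sum_congr rfl fun i _ => by ring

lemma binom_mem_toricIdeal {a b : Fin q → ℕ}
    (h : (∑ i, a i • v i) = (∑ i, b i • v i)) : binom K a b ∈ toricIdeal K v :=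
  Ideal.subset_span ⟨a, b, h, rfl⟩

lemma gpoly_mem_toricIdeal {γ : Fin q → ℤ} (hγ : kerVec v γ) :
    gpoly K γ ∈ toricIdeal K v :=
  binom_mem_toricIdeal (relation_of_kerVec hγ)

end Aux
section Homog

open MvPolynomial

variable {K : Type*} [Field K] {n q : ℕ} {v : Fin q → Fin n → ℤ}

lemma kerVec_add {γ₁ γ₂ : Fin q → ℤ} (h₁ : kerVec v γ₁) (h₂ : kerVec v γ₂) :
    kerVec v (γ₁ + γ₂) := by
  rw [kerVec] at *
  have : ∀ i ∈ Finset.univ, (γ₁ + γ₂) i • v i = γ₁ i • v i + γ₂ i • v i := by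
    intro i _; simp [add_smul]
  rw [Finset.sum_congr rfl this, Finset.sum_add_distrib, h₁, h₂, add_zero]

lemma kerVec_neg {γ : Fin q → ℤ} (h : kerVec v γ) : kerVec v (-γ) := by
  rw [kerVec] at *
  have : ∀ i ∈ Finset.univ, (-γ) i • v i = -(γ i • v i) := by
    intro i _; simp [neg_smul]
  rw [Finset.sum_congr rfl this, Finset.sum_neg_distrib, h, neg_zero]

lemma sum_eq_zero_of_kerVec (hhom : IsHomogeneousConfig v) {γ : Fin q → ℤ}
    (hγ : kerVec v γ) : ∑ i, γ i = 0 := by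
  obtain ⟨w, hw⟩ := hhom
  have h0 : ∀ l, (∑ i, (γ i : ℝ) * v i l) = 0 := by
    intro l
    have h := congrFun hγ l
    rw [sumZ_apply] at h
    simp only [Pi.zero_apply] at h
    calc (∑ i, (γ i : ℝ) * v i l) = ((∑ i, γ i * v i l : ℤ) : ℝ) := by push_cast; rfl
      _ = 0 := by rw [h]; exact Int.cast_zero
  have key : ((∑ i, γ i : ℤ) : ℝ) = 0 := by
    push_cast
    calc (∑ i, (γ i : ℝ)) = ∑ i, (γ i : ℝ) * (∑ l, w l * v i l) := by
          refine Finset.sum_congr rfl fun i _ => ?_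
          rw [hw i, mul_one]
      _ = ∑ i, ∑ l, w l * ((γ i : ℝ) * v i l) := by
          refine Finset.sum_congr rfl fun i _ => ?_
          rw [Finset.mul_sum]
          exact Finset.sum_congr rfl fun l _ => by ring
      _ = ∑ l, w l * (∑ i, (γ i : ℝ) * v i l) := by
          rw [Finset.sum_comm]
          exact Finset.sum_congr rfl fun l _ => by rw [Finset.mul_sum]
      _ = 0 := by
          refine Finset.sum_eq_zero fun l _ => ?_
          rw [h0 l, mul_zero]
  exact_mod_cast key

lemma sum_pos_eq_sum_neg (hhom : IsHomogeneousConfig v) {γ : Fin q → ℤ}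
    (hγ : kerVec v γ) : (∑ i, posExp γ i) = ∑ i, negExp γ i := by
  have h := sum_eq_zero_of_kerVec hhom hγ
  have h2 : (∑ i, ((posExp γ i : ℤ) - negExp γ i)) = 0 := by
    rw [← h]
    exact Finset.sum_congr rfl fun i _ => by simp only [posExp, negExp]; omega
  rw [Finset.sum_sub_distrib, sub_eq_zero] at h2
  exact_mod_cast h2

lemma posExp_neg (γ : Fin q → ℤ) : posExp (-γ) = negExp γ := by
  funext i; simp [posExp, negExp]

lemma negExp_neg (γ : Fin q → ℤ) : negExp (-γ) = posExp γ := by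
  funext i; simp [posExp, negExp]

lemma gpoly_neg (γ : Fin q → ℤ) : gpoly K (-γ) = - gpoly K γ := by
  rw [gpoly, gpoly, binom_eq_mon, binom_eq_mon, posExp_neg, negExp_neg, neg_sub]

lemma degv_neg (hhom : IsHomogeneousConfig v) {γ : Fin q → ℤ} (hγ : kerVec v γ) :
    degv (-γ) = degv γ := by
  rw [degv, degv, posExp_neg, ← sum_pos_eq_sum_neg hhom hγ]

lemma degv_zero_iff (hhom : IsHomogeneousConfig v) {γ : Fin q → ℤ} (hγ : kerVec v γ) :
    degv γ = 0 ↔ γ = 0 := by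
  constructor
  · intro h
    have h2 := sum_pos_eq_sum_neg hhom hγ
    rw [degv] at h
    rw [h] at h2
    funext i
    have hp : posExp γ i = 0 := by
      by_contra hne
      have : 0 < ∑ i, posExp γ i := by
        calc 0 < posExp γ i := Nat.pos_of_ne_zero hne
          _ ≤ _ := Finset.single_le_sum (fun i _ => Nat.zero_le _) (Finset.mem_univ i)
      omega
    have hn2 : negExp γ i = 0 := by
      by_contra hne
      have : 0 < ∑ i, negExp γ i := by
        calc 0 < negExp γ i := Nat.pos_of_ne_zero hne
          _ ≤ _ := Finset.single_le_sum (fun i _ => Nat.zero_le _) (Finset.mem_univ i)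
      omega
    simp only [posExp, negExp] at hp hn2
    simp only [Pi.zero_apply]
    omega
  · intro h
    subst h
    rw [degv]
    refine Finset.sum_eq_zero fun i _ => ?_
    simp [posExp]

/-- The key reduction step. -/
lemma red (hhom : IsHomogeneousConfig v) {γ : Fin q → ℤ} (hγ : kerVec v γ)
    (c d : Fin q → ℕ) (hrel : (∑ i, c i • v i) = (∑ i, d i • v i))
    (hC : binom K c d ∈ circId K v) (hc : ∀ i, c i ≤ posExp γ i)
    (k : Fin q) (hdk : 1 ≤ d k) (hgk : 1 ≤ negExp γ k)
    (IH : ∀ δ : Fin q → ℤ, kerVec v δ → degv δ < degv γ → gpoly K δ ∈ circId K v) :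
    gpoly K γ ∈ circId K v := by
  classical
  set p := posExp γ with hp
  set w := negExp γ with hw
  set u : Fin q → ℕ := fun i => p i - c i + d i with hu
  have key : gpoly K γ = mon K (fun i => p i - c i) * binom K c d + binom K u w := by
    rw [gpoly, binom_eq_mon, binom_eq_mon, binom_eq_mon, mul_sub, mon_mul, mon_mul]
    have h1 : ((fun i => p i - c i) + c) = p := by
      funext i; simp only [Pi.add_apply]; have := hc i; omega
    have h2 : ((fun i => p i - c i) + d) = u := by
      funext i; simp only [Pi.add_apply, hu]
    rw [h1, h2]; ring
  set δ : Fin q → ℤ := fun i => (u i : ℤ) - w i with hδ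
  have hδeq : δ = γ + (fun i => (d i : ℤ) - c i) := by
    funext i
    have h1 := hc i
    have h2 : p i = (γ i).toNat := rfl
    have h3 : w i = (-(γ i)).toNat := rfl
    show ((p i - c i + d i : ℕ) : ℤ) - (w i : ℤ) = γ i + ((d i : ℤ) - c i)
    rw [h2] at h1 ⊢
    rw [h3]
    omega
  have hkerδ : kerVec v δ := by
    rw [hδeq]
    exact kerVec_add hγ (kerVec_of_relation hrel.symm)
  have hcd : (∑ i, c i) = ∑ i, d i := by
    have h := sum_eq_zero_of_kerVec hhom (kerVec_of_relation hrel)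
    have h2 : (∑ i, (c i : ℤ)) = ∑ i, (d i : ℤ) := by
      rw [← sub_eq_zero, ← Finset.sum_sub_distrib]; exact h
    exact_mod_cast h2
  have hup : (∑ i, u i) + ∑ i, c i = (∑ i, p i) + ∑ i, d i := by
    rw [← Finset.sum_add_distrib, ← Finset.sum_add_distrib]
    refine Finset.sum_congr rfl fun i _ => ?_
    have h1 := hc i
    show (p i - c i + d i) + c i = p i + d i
    omega
  have hdd : degv δ + (∑ i, min (u i) (w i)) = ∑ i, u i := by
    rw [degv, ← Finset.sum_add_distrib]
    refine Finset.sum_congr rfl fun i _ => ?_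
    show (((p i - c i + d i : ℕ) : ℤ) - (w i : ℤ)).toNat + min (u i) (w i) = u i
    have h2 : u i = p i - c i + d i := rfl
    omega
  have hmin1 : 1 ≤ ∑ i, min (u i) (w i) := by
    calc 1 ≤ min (u k) (w k) := by
          have h1 : d k ≤ u k := by show d k ≤ p k - c k + d k; omega
          omega
      _ ≤ _ := Finset.single_le_sum (f := fun i => min (u i) (w i))
          (fun i _ => Nat.zero_le _) (Finset.mem_univ k)
  have hdlt : degv δ < degv γ := by
    have : degv γ = ∑ i, p i := rfl
    omega
  rw [key, factor_binom u w]
  exact Ideal.add_mem _ (Ideal.mul_mem_left _ _ hC)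
    (Ideal.mul_mem_left _ _ (IH δ hkerδ hdlt))

end Homog
section KernelChar

open MvPolynomial

variable {K : Type*} [Field K] {n q : ℕ} {v : Fin q → Fin n → ℤ}

noncomputable def lmap (K : Type*) [Field K] {n q : ℕ} (v : Fin q → Fin n → ℤ) :
    MvPolynomial (Fin q) K →ₐ[K] AddMonoidAlgebra K (Fin n → ℤ) :=
  aeval (fun i => AddMonoidAlgebra.single (v i) 1)

lemma lmap_mon (a : Fin q → ℕ) :
    lmap K v (mon K a) = AddMonoidAlgebra.single (∑ i, a i • v i) 1 := by
  rw [mon, lmap, aeval_monomial, map_one, one_mul]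
  rw [Finsupp.prod_fintype _ _ (fun i => pow_zero _)]
  have h2 : ∀ i ∈ Finset.univ, (AddMonoidAlgebra.single (v i) (1:K)) ^
      ((Finsupp.equivFunOnFinite.symm a) i) = AddMonoidAlgebra.single (a i • v i) ((1:K) ^ (a i)) := by
    intro i _
    have : (Finsupp.equivFunOnFinite.symm a) i = a i := rfl
    rw [this, AddMonoidAlgebra.single_pow]
  rw [Finset.prod_congr rfl h2, AddMonoidAlgebra.prod_single]
  simp

lemma toricIdeal_le_ker : toricIdeal K v ≤ RingHom.ker (lmap K v).toRingHom := by
  rw [toricIdeal, Ideal.span_le]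
  rintro f ⟨a, b, hrel, rfl⟩
  simp only [SetLike.mem_coe, RingHom.mem_ker]
  show lmap K v (binom K a b) = 0
  rw [binom_eq_mon, map_sub, lmap_mon, lmap_mon, hrel, sub_self]

lemma rel_of_binom_mem {a b : Fin q → ℕ} (hb : binom K a b ∈ toricIdeal K v) :
    (∑ i, a i • v i) = (∑ i, b i • v i) := by
  have h : lmap K v (binom K a b) = 0 := toricIdeal_le_ker hb
  rw [binom_eq_mon, map_sub, lmap_mon, lmap_mon, sub_eq_zero] at h
  exact (AddMonoidAlgebra.single_left_inj one_ne_zero).mp h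

end KernelChar
section QKer

open MvPolynomial

variable {K : Type*} [Field K] {n q : ℕ} {v : Fin q → Fin n → ℤ}

/-- The rational kernel condition, in the exact form used by `IsCircuitVec`. -/
def Qker (v : Fin q → Fin n → ℤ) (β : Fin q → ℚ) : Prop :=
  (∑ i, β i • (fun l => (v i l : ℚ))) = 0

lemma Qker_apply {β : Fin q → ℚ} (h : Qker v β) (l : Fin n) :
    ∑ i, β i * (v i l : ℚ) = 0 := by
  have h2 := congrFun h l
  rw [Finset.sum_apply] at h2
  simpa using h2

lemma Qker_of_forall {β : Fin q → ℚ} (h : ∀ l, ∑ i, β i * (v i l : ℚ) = 0) :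
    Qker v β := by
  funext l
  rw [Finset.sum_apply]
  simpa using h l

lemma Qker_of_kerVec {γ : Fin q → ℤ} (h : kerVec v γ) :
    Qker v (fun i => (γ i : ℚ)) := by
  refine Qker_of_forall fun l => ?_
  have h2 := congrFun h l
  rw [sumZ_apply] at h2
  simp only [Pi.zero_apply] at h2
  calc (∑ i, ((γ i : ℚ)) * (v i l : ℚ)) = ((∑ i, γ i * v i l : ℤ) : ℚ) := by push_cast; rfl
    _ = 0 := by rw [h2]; exact Int.cast_zero

lemma Qker_sub {β₁ β₂ : Fin q → ℚ} (h₁ : Qker v β₁) (h₂ : Qker v β₂) (t : ℚ) :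
    Qker v (fun i => β₁ i - t * β₂ i) := by
  refine Qker_of_forall fun l => ?_
  have e : ∀ i ∈ Finset.univ, (β₁ i - t * β₂ i) * (v i l : ℚ)
      = β₁ i * v i l - t * (β₂ i * v i l) := fun i _ => by ring
  rw [Finset.sum_congr rfl e, Finset.sum_sub_distrib, ← Finset.mul_sum,
    Qker_apply h₁ l, Qker_apply h₂ l, mul_zero, sub_zero]

lemma int_scale (β : Fin q → ℚ) : ∃ (α₀ : Fin q → ℤ) (N : ℕ), 0 < N ∧
    ∀ i, (α₀ i : ℚ) = (N : ℚ) * β i := by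
  classical
  refine ⟨fun i => (β i).num * (((∏ j, (β j).den) / (β i).den : ℕ) : ℤ), ∏ j, (β j).den,
    Finset.prod_pos fun j _ => (β j).pos, fun i => ?_⟩
  beta_reduce
  obtain ⟨t, ht⟩ := Finset.dvd_prod_of_mem (fun j => (β j).den) (Finset.mem_univ i)
  rw [ht, Nat.mul_div_cancel_left t (β i).pos]
  have hden : ((β i).den : ℚ) ≠ 0 := Nat.cast_ne_zero.mpr (β i).den_nz
  have key : ((β i).num : ℚ) = β i * (β i).den := (div_eq_iff hden).mp (Rat.num_div_den (β i))
  push_cast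
  rw [key]
  ring

lemma make_primitive (α₀ : Fin q → ℤ) (h0 : α₀ ≠ 0) : ∃ (α : Fin q → ℤ) (g : ℤ),
    0 < g ∧ (∀ i, α₀ i = g * α i) ∧ Finset.univ.gcd α = 1 := by
  classical
  set g := Finset.univ.gcd α₀ with hg
  have hdvd : ∀ i, g ∣ α₀ i := fun i => Finset.gcd_dvd (Finset.mem_univ i)
  have hgne : g ≠ 0 := by
    intro h
    apply h0
    funext i
    have := hdvd i
    rw [h] at this
    simpa using this
  have hgnn : 0 ≤ g := Int.nonneg_of_normalize_eq_self Finset.normalize_gcd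
  refine ⟨fun i => α₀ i / g, g, lt_of_le_of_ne hgnn (Ne.symm hgne), fun i => (Int.mul_ediv_cancel' (hdvd i)).symm, ?_⟩
  set α : Fin q → ℤ := fun i => α₀ i / g with hα
  have hfac : ∀ i, α₀ i = g * α i := fun i => (Int.mul_ediv_cancel' (hdvd i)).symm
  have hGg : g * Finset.univ.gcd α ∣ g := by
    rw [hg]
    refine Finset.dvd_gcd fun i _ => ?_
    rw [hfac i]
    exact mul_dvd_mul_left g (Finset.gcd_dvd (Finset.mem_univ i))
  have h1 : Finset.univ.gcd α ∣ 1 := by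
    have := hGg
    rw [show g = g * 1 by ring] at this
    exact (mul_dvd_mul_iff_left hgne).mp (by rw [mul_one] at this ⊢; exact hGg)
  have h2 : 0 ≤ Finset.univ.gcd α := Int.nonneg_of_normalize_eq_self Finset.normalize_gcd
  rcases Int.isUnit_iff.mp (isUnit_of_dvd_one h1) with h | h <;> omega

end QKer
section Conformal

open MvPolynomial

variable {K : Type*} [Field K] {n q : ℕ} {v : Fin q → Fin n → ℤ}

/-- Sign-conformality. -/
def ConfTo {q : ℕ} (β : Fin q → ℚ) (α : Fin q → ℤ) : Prop :=
  ∀ i, (0 < α i → 0 < β i) ∧ (α i < 0 → β i < 0)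

lemma circuit_of_minimal (β : Fin q → ℚ) (hker : Qker v β) (hne : β ≠ 0)
    (hmin : ∀ β' : Fin q → ℚ, Qker v β' → β' ≠ 0 →
      Function.support β' ⊆ Function.support β →
      Function.support β' = Function.support β) :
    ∃ α : Fin q → ℤ, IsCircuitVec v α ∧ ConfTo β α := by
  obtain ⟨α₀, N, hN, hNeq⟩ := int_scale β
  have hNQ : (0:ℚ) < N := by exact_mod_cast hN
  have hα₀ne : α₀ ≠ 0 := by
    intro h
    apply hne
    funext i
    have h1 := hNeq i
    rw [h] at h1
    simp only [Pi.zero_apply, Int.cast_zero] at h1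
    have := (mul_eq_zero.mp h1.symm).resolve_left (ne_of_gt hNQ)
    simpa using this
  obtain ⟨α, g, hg, hfac, hgcd⟩ := make_primitive α₀ hα₀ne
  have hgQ : (0:ℚ) < g := by exact_mod_cast hg
  have key : ∀ i, (g:ℚ) * (α i : ℚ) = (N:ℚ) * β i := by
    intro i
    have h := hNeq i
    rw [hfac i] at h
    push_cast at h
    linarith [h]
  have hc : (0:ℚ) < (g:ℚ)/N := by positivity
  have hβeq : ∀ i, β i = ((g:ℚ)/N) * (α i : ℚ) := by
    intro i
    have h := key i
    field_simp
    linarith [h]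
  have hofα : ∀ i, α i = 0 ↔ β i = 0 := by
    intro i
    constructor
    · intro h; rw [hβeq i, h]; simp
    · intro h
      have h1 := hβeq i
      rw [h] at h1
      have h2 : (α i : ℚ) = 0 := by
        rcases mul_eq_zero.mp h1.symm with h3 | h3
        · exact absurd h3 (ne_of_gt hc)
        · exact h3
      exact_mod_cast h2
  have hsupp : Function.support α = Function.support β := by
    ext i
    simp only [Function.mem_support]
    exact not_iff_not.mpr (hofα i)
  have hkerα₀ : kerVec v α₀ := by
    funext l
    have hql := Qker_apply hker l
    have : ((∑ i, α₀ i * v i l : ℤ) : ℚ) = 0 := by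
      push_cast
      calc (∑ i, ((α₀ i : ℚ)) * (v i l : ℚ))
          = ∑ i, (N:ℚ) * (β i * (v i l : ℚ)) := by
            refine Finset.sum_congr rfl fun i _ => ?_
            rw [hNeq i]; ring
        _ = (N:ℚ) * ∑ i, β i * (v i l : ℚ) := by rw [Finset.mul_sum]
        _ = 0 := by rw [hql, mul_zero]
    rw [sumZ_apply]
    simp only [Pi.zero_apply]
    exact_mod_cast this
  have hkerα : kerVec v α := by
    have hsmul : g • (∑ i, α i • v i) = (0 : Fin n → ℤ) := by
      rw [Finset.smul_sum]
      have : ∀ i ∈ Finset.univ, g • (α i • v i) = α₀ i • v i := by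
        intro i _
        rw [smul_smul, ← hfac i]
      rw [Finset.sum_congr rfl this]
      exact hkerα₀
    rcases smul_eq_zero.mp hsmul with h | h
    · exact absurd h (ne_of_gt hg)
    · exact h
  have hαne : α ≠ 0 := by
    obtain ⟨i, hi⟩ := Function.ne_iff.mp hne
    have hβi : β i ≠ 0 := by simpa using hi
    intro h
    apply hβi
    rw [← hofα i, h]
    rfl
  refine ⟨α, ⟨hαne, hkerα, ?_, hgcd⟩, fun i => ?_⟩
  · intro β' h1 h2 h3
    rw [hsupp] at h3 ⊢
    exact hmin β' h1 h2 h3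
  · constructor
    · intro h
      rw [hβeq i]
      have : (0:ℚ) < (α i : ℚ) := by exact_mod_cast h
      positivity
    · intro h
      rw [hβeq i]
      have h2 : (α i : ℚ) < 0 := by exact_mod_cast h
      exact mul_neg_of_pos_of_neg hc h2

end Conformal
section Shrink

open MvPolynomial Finset

variable {K : Type*} [Field K] {n q : ℕ} {v : Fin q → Fin n → ℤ}

lemma Qker_neg {β : Fin q → ℚ} (h : Qker v β) : Qker v (fun i => -(β i)) := by
  refine Qker_of_forall fun l => ?_
  have e : ∀ i ∈ Finset.univ, (-(β i)) * (v i l : ℚ) = -(β i * (v i l : ℚ)) :=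
    fun i _ => by ring
  rw [Finset.sum_congr rfl e, Finset.sum_neg_distrib, Qker_apply h l, neg_zero]

lemma shrink (β β' : Fin q → ℚ) (hker : Qker v β) (hker' : Qker v β')
    (hsub : ∀ i, β' i ≠ 0 → β i ≠ 0) (b : Fin q) (hb : β b ≠ 0) (hb' : β' b = 0)
    (hne' : β' ≠ 0) :
    ∃ β₂ : Fin q → ℚ, Qker v β₂ ∧ β₂ ≠ 0 ∧
      (∀ i, (0 < β₂ i → 0 < β i) ∧ (β₂ i < 0 → β i < 0)) ∧
      (Finset.univ.filter (fun i => β₂ i ≠ 0)).card <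
        (Finset.univ.filter (fun i => β i ≠ 0)).card := by
  classical
  obtain ⟨i₀, hi₀⟩ := Function.ne_iff.mp hne'
  have hi₀' : β' i₀ ≠ 0 := by simpa using hi₀
  obtain ⟨β'', hker'', hsub'', hb'', hpos⟩ :
      ∃ β'' : Fin q → ℚ, Qker v β'' ∧ (∀ i, β'' i ≠ 0 → β i ≠ 0) ∧ β'' b = 0 ∧
        (0 < β i₀ / β'' i₀) := by
    rcases lt_trichotomy (β i₀ / β' i₀) 0 with hlt | heq | hgt
    · refine ⟨fun i => -(β' i), Qker_neg hker', fun i hi => hsub i (by simpa using hi),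
        by simp [hb'], ?_⟩
      rw [div_neg]
      linarith
    · exfalso
      rcases div_eq_zero_iff.mp heq with h | h
      · exact hsub i₀ hi₀' h
      · exact hi₀' h
    · exact ⟨β', hker', hsub, hb', hgt⟩
  set T : Finset ℚ :=
    (Finset.univ.filter (fun i => 0 < β i / β'' i)).image (fun i => β i / β'' i) with hT
  have hTne : T.Nonempty :=
    ⟨β i₀ / β'' i₀, Finset.mem_image_of_mem _ (Finset.mem_filter.mpr ⟨Finset.mem_univ _, hpos⟩)⟩
  set t := T.min' hTne with htdef
  obtain ⟨a, haf, hat⟩ := Finset.mem_image.mp (T.min'_mem hTne)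
  have hapos : 0 < β a / β'' a := (Finset.mem_filter.mp haf).2
  have htpos : 0 < t := by rw [htdef, ← hat]; exact hapos
  set β₂ : Fin q → ℚ := fun i => β i - t * β'' i with hβ₂
  have hβ''a : β'' a ≠ 0 := by
    intro h
    rw [h, div_zero] at hapos
    exact lt_irrefl _ hapos
  have hβ₂a : β₂ a = 0 := by
    show β a - t * β'' a = 0
    rw [htdef, ← hat, div_mul_cancel₀ _ hβ''a, sub_self]
  have hβa : β a ≠ 0 := by
    intro h
    rw [h, zero_div] at hapos
    exact lt_irrefl _ hapos
  have hsign : ∀ i, (0 < β₂ i → 0 < β i) ∧ (β₂ i < 0 → β i < 0) := by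
    intro i
    by_cases h0 : β'' i = 0
    · have he : β₂ i = β i := by show β i - t * β'' i = β i; rw [h0, mul_zero, sub_zero]
      rw [he]
      exact ⟨id, id⟩
    · have hβi : β i ≠ 0 := hsub'' i h0
      have hβr : β i = (β i / β'' i) * β'' i := (div_mul_cancel₀ _ h0).symm
      have hβ₂r : β₂ i = (β i / β'' i - t) * β'' i := by
        show β i - t * β'' i = _
        rw [sub_mul, ← hβr]
      set r := β i / β'' i with hrdef
      rcases lt_trichotomy r 0 with hrneg | hr0 | hrpos
      · have hrt : r - t < 0 := by linarith
        rcases lt_trichotomy (β'' i) 0 with hbn | hb0 | hbp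
        · have k1 : 0 < r * β'' i := mul_pos_of_neg_of_neg hrneg hbn
          have k2 : 0 < (r - t) * β'' i := mul_pos_of_neg_of_neg hrt hbn
          exact ⟨fun _ => by linarith, fun hcon => by linarith⟩
        · exact absurd hb0 h0
        · have k1 : r * β'' i < 0 := mul_neg_of_neg_of_pos hrneg hbp
          have k2 : (r - t) * β'' i < 0 := mul_neg_of_neg_of_pos hrt hbp
          exact ⟨fun hcon => by linarith, fun _ => by linarith⟩
      · exact absurd (by rw [hβr, hr0, zero_mul]) hβi
      · have hmem : i ∈ Finset.univ.filter (fun i => 0 < β i / β'' i) :=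
          Finset.mem_filter.mpr ⟨Finset.mem_univ _, hrpos⟩
        have htr : t ≤ r := Finset.min'_le T r (Finset.mem_image_of_mem _ hmem)
        have hrt : 0 ≤ r - t := by linarith
        rcases lt_trichotomy (β'' i) 0 with hbn | hb0 | hbp
        · have k1 : r * β'' i < 0 := mul_neg_of_pos_of_neg hrpos hbn
          have k2 : (r - t) * β'' i ≤ 0 := mul_nonpos_of_nonneg_of_nonpos hrt (le_of_lt hbn)
          exact ⟨fun hcon => by linarith, fun _ => by linarith⟩
        · exact absurd hb0 h0
        · have k1 : 0 < r * β'' i := mul_pos hrpos hbp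
          have k2 : 0 ≤ (r - t) * β'' i := mul_nonneg hrt (le_of_lt hbp)
          exact ⟨fun _ => by linarith, fun hcon => by linarith⟩
  have hsub₂ : (Finset.univ.filter (fun i => β₂ i ≠ 0)) ⊆
      (Finset.univ.filter (fun i => β i ≠ 0)) := by
    intro i hi
    have hi2 : β₂ i ≠ 0 := (Finset.mem_filter.mp hi).2
    refine Finset.mem_filter.mpr ⟨Finset.mem_univ _, ?_⟩
    by_cases h0 : β'' i = 0
    · intro h
      apply hi2
      show β i - t * β'' i = 0
      rw [h0, h, mul_zero, sub_zero]
    · exact hsub'' i h0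
  refine ⟨β₂, Qker_sub hker hker'' t, ?_, hsign, ?_⟩
  · intro h
    apply hb
    have h2 : β₂ b = 0 := by rw [h]; rfl
    have h3 : β₂ b = β b := by show β b - t * β'' b = β b; rw [hb'', mul_zero, sub_zero]
    rw [← h3, h2]
  · refine Finset.card_lt_card ⟨hsub₂, fun hcon => ?_⟩
    have ha1 : a ∈ Finset.univ.filter (fun i => β i ≠ 0) :=
      Finset.mem_filter.mpr ⟨Finset.mem_univ _, hβa⟩
    have ha2 := hcon ha1
    exact (Finset.mem_filter.mp ha2).2 hβ₂a

lemma exists_conformal_circuit (β : Fin q → ℚ) (hker : Qker v β) (hne : β ≠ 0) :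
    ∃ α : Fin q → ℤ, IsCircuitVec v α ∧ ConfTo β α := by
  classical
  suffices H : ∀ s : ℕ, ∀ β : Fin q → ℚ,
      (Finset.univ.filter (fun i => β i ≠ 0)).card ≤ s → Qker v β → β ≠ 0 →
      ∃ α : Fin q → ℤ, IsCircuitVec v α ∧ ConfTo β α by
    exact H _ β le_rfl hker hne
  intro s
  induction s with
  | zero =>
    intro β hcard hker hne
    exfalso
    apply hne
    funext i
    have := Finset.card_eq_zero.mp (Nat.le_zero.mp hcard)
    by_contra hne2
    have : i ∈ Finset.univ.filter (fun i => β i ≠ 0) :=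
      Finset.mem_filter.mpr ⟨Finset.mem_univ _, by simpa using hne2⟩
    rw [Finset.card_eq_zero.mp (Nat.le_zero.mp hcard)] at this
    exact absurd this (Finset.notMem_empty _)
  | succ s ih =>
    intro β hcard hker hne
    by_cases hmin : ∀ β' : Fin q → ℚ, Qker v β' → β' ≠ 0 →
        Function.support β' ⊆ Function.support β →
        Function.support β' = Function.support β
    · exact circuit_of_minimal β hker hne hmin
    · push_neg at hmin
      obtain ⟨β', h1, h2, h3, h4⟩ := hmin
      have hss : Function.support β' ⊂ Function.support β := ⟨h3, fun hcon => h4 (le_antisymm h3 hcon)⟩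
      obtain ⟨b, hbβ, hbβ'⟩ := Set.exists_of_ssubset hss
      have hsubf : ∀ i, β' i ≠ 0 → β i ≠ 0 := fun i hi => h3 hi
      obtain ⟨β₂, hk2, hn2, hc2, hcardlt⟩ := shrink β β' hker h1 hsubf b
        (Function.mem_support.mp hbβ) (by simpa using hbβ') h2
      obtain ⟨α, hcirc, hconf⟩ := ih β₂ (by omega) hk2 hn2
      exact ⟨α, hcirc, fun i =>
        ⟨fun h => (hc2 i).1 ((hconf i).1 h), fun h => (hc2 i).2 ((hconf i).2 h)⟩⟩

lemma exists_conformal_circuit_int (γ : Fin q → ℤ) (hker : kerVec v γ) (hne : γ ≠ 0) :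
    ∃ α : Fin q → ℤ, IsCircuitVec v α ∧
      (∀ i, (0 < α i → 0 < γ i) ∧ (α i < 0 → γ i < 0)) := by
  have hne' : (fun i => (γ i : ℚ)) ≠ 0 := by
    intro h
    apply hne
    funext i
    have := congrFun h i
    simp only [Pi.zero_apply] at this ⊢
    exact_mod_cast this
  obtain ⟨α, hcirc, hconf⟩ := exists_conformal_circuit (fun i => (γ i : ℚ))
    (Qker_of_kerVec hker) hne'
  refine ⟨α, hcirc, fun i => ⟨fun h => ?_, fun h => ?_⟩⟩
  · have h1 := (hconf i).1 h
    have h2 : (0:ℚ) < (γ i : ℚ) := by simpa using h1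
    exact_mod_cast h2
  · have h1 := (hconf i).2 h
    have h2 : ((γ i : ℚ)) < 0 := by simpa using h1
    exact_mod_cast h2

end Shrink
section Normality

open MvPolynomial

variable {K : Type*} [Field K] {n q : ℕ} {v : Fin q → Fin n → ℤ}

lemma exists_rep_of_mem_closure {x : Fin n → ℤ}
    (hx : x ∈ AddSubmonoid.closure (Set.range v)) :
    ∃ d : Fin q → ℕ, x = ∑ i, d i • v i := by
  classical
  let S : AddSubmonoid (Fin n → ℤ) :=
    { carrier := {x | ∃ d : Fin q → ℕ, x = ∑ i, d i • v i}
      zero_mem' := ⟨0, by simp⟩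
      add_mem' := by
        rintro x y ⟨dx, rfl⟩ ⟨dy, rfl⟩
        refine ⟨dx + dy, ?_⟩
        rw [← Finset.sum_add_distrib]
        refine Finset.sum_congr rfl fun i _ => ?_
        show dx i • v i + dy i • v i = (dx i + dy i) • v i
        rw [add_smul] }
  have hle : AddSubmonoid.closure (Set.range v) ≤ S := by
    rw [AddSubmonoid.closure_le]
    rintro _ ⟨i, rfl⟩
    refine ⟨fun j => if j = i then 1 else 0, ?_⟩
    have h : ∀ j ∈ Finset.univ, (if j = i then (1:ℕ) else 0) • v j
        = if j = i then v j else 0 := by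
      intro j _
      split <;> simp
    rw [Finset.sum_congr rfl h, Finset.sum_ite_eq' Finset.univ i v]
    simp
  exact hle hx

lemma zcombo_mem (e : Fin q → ℤ) :
    (∑ i, e i • v i) ∈ AddSubgroup.closure (Set.range v) :=
  AddSubgroup.sum_mem _ fun i _ =>
    AddSubgroup.zsmul_mem _ (AddSubgroup.subset_closure (Set.mem_range_self i)) _

lemma sum_ite_one (k : Fin q) : (∑ i, (if i = k then (1:ℕ) else 0)) = 1 := by
  rw [Finset.sum_ite_eq' Finset.univ k (fun _ => (1:ℕ))]
  simp

lemma sum_ite_mul (k : Fin q) (f : Fin q → ℤ) :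
    (∑ i, (if i = k then (1:ℤ) else 0) * f i) = f k := by
  have h : ∀ i ∈ Finset.univ, (if i = k then (1:ℤ) else 0) * f i
      = if i = k then f i else 0 := by
    intro i _; split <;> simp
  rw [Finset.sum_congr rfl h, Finset.sum_ite_eq' Finset.univ k f]
  simp

/-- The normality move. -/
lemma moveA (hhom : IsHomogeneousConfig v) (hnorm : IsNormalConfig v)
    {γ α : Fin q → ℤ} (hγ : kerVec v γ) (hα : kerVec v α)
    (hconf : ∀ i, (0 < α i → 0 < γ i) ∧ (α i < 0 → γ i < 0))
    {M : ℕ} (hM : 2 ≤ M) (hsupN : ∀ i, negExp α i ≤ M) (hsupP : ∀ i, posExp α i ≤ M)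
    (j : Fin q) (hj : negExp α j = M)
    (k : Fin q) (hk1 : 1 ≤ posExp γ k) (hk2 : α k ≤ 0 ∨ 2 ≤ posExp γ k)
    (IH : ∀ δ : Fin q → ℤ, kerVec v δ → degv δ < degv γ → gpoly K δ ∈ circId K v) :
    gpoly K γ ∈ circId K v := by
  classical
  have hαj : α j < 0 := by
    have : 1 ≤ negExp α j := by omega
    simp only [negExp] at this; omega
  have hγj : γ j < 0 := (hconf j).2 hαj
  have hγk : 0 < γ k := by simp only [posExp] at hk1; omega
  have hαk : 0 ≤ α k := by
    by_contra hcon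
    have := (hconf k).2 (by omega)
    omega
  have hkj : k ≠ j := by
    intro h; rw [h] at hγk; omega
  have hγnj : 1 ≤ negExp γ j := by simp only [negExp]; omega
  have hγpj : posExp γ j = 0 := by simp only [posExp]; omega
  have hαpj : posExp α j = 0 := by simp only [posExp]; omega
  have hαnk : negExp α k = 0 := by simp only [negExp]; omega
  set e : Fin q → ℤ := fun i =>
    (posExp γ i : ℤ) - (if i = k then 1 else 0) - (if i = j then 1 else 0) with he
  set P : Fin n → ℤ := ∑ i, e i • v i with hP
  have hPgrp : P ∈ AddSubgroup.closure (Set.range v) := zcombo_mem e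
  have hMR : (0:ℝ) < (M:ℝ) := by positivity
  set c : Fin q → ℝ := fun i =>
    (posExp γ i : ℝ) - (if i = k then 1 else 0) - (if i = j then 1 else 0)
      + ((negExp α i : ℝ) - (posExp α i : ℝ))/M with hc
  have hcnn : ∀ i, 0 ≤ c i := by
    intro i
    show (0:ℝ) ≤ (posExp γ i : ℝ) - (if i = k then 1 else 0) - (if i = j then 1 else 0)
      + ((negExp α i : ℝ) - (posExp α i : ℝ))/M
    by_cases hik : i = k
    · subst hik
      rw [if_pos rfl, if_neg hkj, hαnk]
      simp only [Nat.cast_zero]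
      have hγk1 : (1:ℝ) ≤ (posExp γ i : ℝ) := by exact_mod_cast hk1
      have hdiv : (posExp α i : ℝ)/M ≤ 1 := by
        rw [div_le_one hMR]; exact_mod_cast hsupP i
      have hdiv0 : (0:ℝ) ≤ (posExp α i : ℝ)/M := by positivity
      have e1 : ((0:ℝ) - (posExp α i : ℝ))/M = -((posExp α i : ℝ)/M) := by ring
      rw [e1]
      rcases hk2 with h | h
      · have hz : posExp α i = 0 := by simp only [posExp]; omega
        rw [hz]
        simp only [Nat.cast_zero]
        have hz2 : -((0:ℝ)/(M:ℝ)) = 0 := by ring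
        rw [hz2]
        linarith
      · have h2 : (2:ℝ) ≤ (posExp γ i : ℝ) := by exact_mod_cast h
        linarith
    · by_cases hij : i = j
      · subst hij
        rw [if_neg hik, if_pos rfl, hj, hγpj, hαpj]
        simp only [Nat.cast_zero]
        have e2 : ((M:ℝ) - 0)/M = 1 := by
          rw [sub_zero]; exact div_self (ne_of_gt hMR)
        rw [e2]
        norm_num
      · rw [if_neg hik, if_neg hij]
        by_cases hp : 0 < posExp α i
        · have hγpi : 1 ≤ posExp γ i := by
            have h1 : 0 < α i := by simp only [posExp] at hp; omega
            have := (hconf i).1 h1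
            simp only [posExp]; omega
          have hαni : negExp α i = 0 := by
            simp only [posExp] at hp; simp only [negExp]; omega
          rw [hαni]
          simp only [Nat.cast_zero]
          have h4 : (posExp α i : ℝ)/M ≤ 1 := by
            rw [div_le_one hMR]; exact_mod_cast hsupP i
          have h5 : (1:ℝ) ≤ (posExp γ i : ℝ) := by exact_mod_cast hγpi
          have e1 : ((0:ℝ) - (posExp α i : ℝ))/M = -((posExp α i : ℝ)/M) := by ring
          rw [e1]
          linarith
        · have hαpi : posExp α i = 0 := by omega
          rw [hαpi]
          simp only [Nat.cast_zero]
          have h5 : (0:ℝ) ≤ (posExp γ i : ℝ) := by positivity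
          have h6 : (0:ℝ) ≤ (negExp α i : ℝ)/M := by positivity
          have e3 : ((negExp α i : ℝ) - 0)/M = (negExp α i : ℝ)/M := by ring
          rw [e3]
          linarith
  have hPcone : ∀ l, ((P l : ℤ) : ℝ) = ∑ i, c i * (v i l : ℝ) := by
    intro l
    have hPl : P l = ∑ i, e i * v i l := by rw [hP]; exact sumZ_apply e l
    have hαl : (∑ i, (α i : ℝ) * (v i l : ℝ)) = 0 := by
      have h2 := congrFun hα l
      rw [sumZ_apply] at h2
      simp only [Pi.zero_apply] at h2
      calc (∑ i, ((α i : ℝ)) * (v i l : ℝ)) = ((∑ i, α i * v i l : ℤ) : ℝ) := by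
            push_cast; rfl
        _ = 0 := by rw [h2]; exact Int.cast_zero
    rw [hPl]
    push_cast
    have expand : ∀ i ∈ Finset.univ, c i * (v i l : ℝ)
        = ((posExp γ i : ℝ) - (if i = k then 1 else 0) - (if i = j then 1 else 0)) * v i l
          + (1/M) * (((negExp α i : ℝ) - (posExp α i : ℝ)) * v i l) := by
      intro i _
      show ((posExp γ i : ℝ) - (if i = k then 1 else 0) - (if i = j then 1 else 0)
        + ((negExp α i : ℝ) - (posExp α i : ℝ))/M) * (v i l : ℝ) = _
      ring
    rw [Finset.sum_congr rfl expand, Finset.sum_add_distrib, ← Finset.mul_sum]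
    have hsum2 : (∑ i, ((negExp α i : ℝ) - (posExp α i : ℝ)) * (v i l : ℝ)) = 0 := by
      have hterm : ∀ i ∈ Finset.univ, ((negExp α i : ℝ) - (posExp α i : ℝ)) * (v i l : ℝ)
          = -((α i : ℝ) * v i l) := by
        intro i _
        have h7 : ((negExp α i : ℤ)) - (posExp α i : ℤ) = -(α i) := by
          simp only [posExp, negExp]; omega
        have h8 : ((negExp α i : ℝ)) - (posExp α i : ℝ) = -((α i : ℝ)) := by
          calc ((negExp α i : ℝ)) - (posExp α i : ℝ)
              = (((negExp α i : ℤ) - (posExp α i : ℤ) : ℤ) : ℝ) := by push_cast; ring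
            _ = -((α i : ℝ)) := by rw [h7]; push_cast; ring
        rw [h8]; ring
      rw [Finset.sum_congr rfl hterm, Finset.sum_neg_distrib, hαl, neg_zero]
    rw [hsum2, mul_zero, add_zero]
    refine Finset.sum_congr rfl fun i _ => ?_
    show ((((posExp γ i : ℤ) - if i = k then 1 else 0) - if i = j then 1 else 0 : ℤ) : ℝ)
        * (v i l : ℝ)
      = ((posExp γ i : ℝ) - (if i = k then 1 else 0) - (if i = j then 1 else 0)) * (v i l : ℝ)
    congr 1
    split_ifs <;> push_cast <;> ring
  have hPmem : P ∈ AddSubmonoid.closure (Set.range v) :=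
    (hnorm P).mpr ⟨hPgrp, c, hcnn, fun l => hPcone l⟩
  obtain ⟨d', hd'⟩ := exists_rep_of_mem_closure hPmem
  set cnat : Fin q → ℕ := fun i => posExp γ i - (if i = k then 1 else 0) with hcnat
  set dnat : Fin q → ℕ := fun i => d' i + (if i = j then 1 else 0) with hdnat
  have hrel : (∑ i, cnat i • v i) = (∑ i, dnat i • v i) := by
    funext l
    rw [sumN_apply, sumN_apply]
    have hd'l : (∑ i, (d' i : ℤ) * v i l) = P l := by
      have h9 := congrFun hd' l
      rw [sumN_apply] at h9
      exact h9.symm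
    have hPl : P l = ∑ i, e i * v i l := by rw [hP]; exact sumZ_apply e l
    have hek : (∑ i, ((if i = k then (1:ℤ) else 0) * v i l)) = v k l := sum_ite_mul k _
    have hej : (∑ i, ((if i = j then (1:ℤ) else 0) * v i l)) = v j l := sum_ite_mul j _
    have hcl : ∀ i ∈ Finset.univ, (cnat i : ℤ) * v i l
        = (posExp γ i : ℤ) * v i l - (if i = k then (1:ℤ) else 0) * v i l := by
      intro i _
      have h10 : (cnat i : ℤ) = (posExp γ i : ℤ) - (if i = k then (1:ℤ) else 0) := by
        show ((posExp γ i - (if i = k then 1 else 0) : ℕ) : ℤ) = _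
        by_cases h : i = k
        · subst h
          rw [if_pos rfl, if_pos rfl]
          omega
        · rw [if_neg h, if_neg h]
          omega
      rw [h10]; ring
    have hdl : ∀ i ∈ Finset.univ, (dnat i : ℤ) * v i l
        = (d' i : ℤ) * v i l + (if i = j then (1:ℤ) else 0) * v i l := by
      intro i _
      have h11 : (dnat i : ℤ) = (d' i : ℤ) + (if i = j then (1:ℤ) else 0) := by
        show ((d' i + (if i = j then 1 else 0) : ℕ) : ℤ) = _
        split_ifs <;> omega
      rw [h11]; ring
    rw [Finset.sum_congr rfl hcl, Finset.sum_congr rfl hdl, Finset.sum_sub_distrib,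
      Finset.sum_add_distrib, hek, hej, hd'l, hPl]
    have hel : ∀ i ∈ Finset.univ, e i * v i l
        = (posExp γ i : ℤ) * v i l - (if i = k then (1:ℤ) else 0) * v i l
          - (if i = j then (1:ℤ) else 0) * v i l := by
      intro i _
      show (((posExp γ i : ℤ) - (if i = k then 1 else 0)) - (if i = j then 1 else 0)) * v i l = _
      ring
    rw [Finset.sum_congr rfl hel, Finset.sum_sub_distrib, Finset.sum_sub_distrib, hek, hej]
    ring
  have hcle : ∀ i, cnat i ≤ posExp γ i := by
    intro i
    show posExp γ i - (if i = k then 1 else 0) ≤ posExp γ i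
    omega
  set ρ : Fin q → ℤ := fun i => (cnat i : ℤ) - dnat i with hρ
  have hkerρ : kerVec v ρ := kerVec_of_relation hrel
  have hdegρ : degv ρ < degv γ := by
    have h1 : ∀ i ∈ Finset.univ, posExp ρ i ≤ cnat i := by
      intro i _
      show ((cnat i : ℤ) - dnat i).toNat ≤ cnat i
      omega
    have h2 : (∑ i, cnat i) + 1 = ∑ i, posExp γ i := by
      rw [← sum_ite_one k, ← Finset.sum_add_distrib]
      refine Finset.sum_congr rfl fun i _ => ?_
      show (posExp γ i - (if i = k then 1 else 0)) + (if i = k then 1 else 0) = posExp γ i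
      split_ifs with h
      · subst h; omega
      · omega
    have h3 : degv ρ ≤ ∑ i, cnat i := Finset.sum_le_sum h1
    have h4 : degv γ = ∑ i, posExp γ i := rfl
    omega
  have hC : binom K cnat dnat ∈ circId K v := by
    rw [factor_binom]
    exact Ideal.mul_mem_left _ _ (IH ρ hkerρ hdegρ)
  have hdj : 1 ≤ dnat j := by
    show 1 ≤ d' j + (if j = j then 1 else 0)
    rw [if_pos rfl]
    omega
  exact red hhom hγ cnat dnat hrel hC hcle j hdj hγnj IH

end Normality
section MainInduction

open MvPolynomial

variable {K : Type*} [Field K] {n q : ℕ} {v : Fin q → Fin n → ℤ}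

lemma neg_circuit {α : Fin q → ℤ} (h : IsCircuitVec v α) : IsCircuitVec v (-α) := by
  obtain ⟨h1, h2, h3, h4⟩ := h
  refine ⟨by simpa using h1, ?_, ?_, ?_⟩
  · have := kerVec_neg (v := v) h2
    exact this
  · have hsupp : Function.support (-α) = Function.support α := by
      ext i
      simp [Function.mem_support]
    intro β hβ hβne hβsub
    rw [hsupp] at hβsub ⊢
    exact h3 β hβ hβne hβsub
  · have hdvd : Finset.univ.gcd (-α) ∣ 1 := by
      rw [← h4]
      refine Finset.dvd_gcd fun i _ => ?_
      have : Finset.univ.gcd (-α) ∣ (-α) i := Finset.gcd_dvd (Finset.mem_univ i)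
      simpa using this.neg_right
    have hnn : 0 ≤ Finset.univ.gcd (-α) := Int.nonneg_of_normalize_eq_self Finset.normalize_gcd
    rcases Int.isUnit_iff.mp (isUnit_of_dvd_one hdvd) with h | h <;> omega

lemma exists_neg_entry (hhom : IsHomogeneousConfig v) {α : Fin q → ℤ}
    (hker : kerVec v α) (hne : α ≠ 0) : ∃ k, 1 ≤ negExp α k := by
  by_contra hcon
  push_neg at hcon
  have hnn : ∀ i ∈ Finset.univ, (0:ℤ) ≤ α i := by
    intro i _
    have := hcon i
    simp only [negExp] at this
    omega
  have hsum := sum_eq_zero_of_kerVec hhom hker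
  have hz := (Finset.sum_eq_zero_iff_of_nonneg hnn).mp hsum
  apply hne
  funext i
  exact hz i (Finset.mem_univ i)

lemma gpoly_zero : gpoly K (0 : Fin q → ℤ) = 0 := by
  rw [gpoly, binom_eq_mon]
  have : posExp (0 : Fin q → ℤ) = negExp 0 := by
    funext i; simp [posExp, negExp]
  rw [this, sub_self]

lemma sqfree_span_le_circId :
    Ideal.span { g : MvPolynomial (Fin q) K | IsSqFreeCircuitPoly K v g } ≤ circId K v := by
  refine Ideal.span_mono fun g hg => ?_
  obtain ⟨a, ha, hb, _⟩ := hg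
  exact ⟨a, ha, hb⟩

lemma connectorStep (hhom : IsHomogeneousConfig v) (hconn : ConnectorCondition K v)
    {γ α : Fin q → ℤ} (hγ : kerVec v γ) (hcirc : IsCircuitVec v α)
    (hconf : ∀ i, (0 < α i → 0 < γ i) ∧ (α i < 0 → γ i < 0))
    (hunb : Finset.univ.sup (posExp α) < Finset.univ.sup (negExp α))
    (IH : ∀ δ : Fin q → ℤ, kerVec v δ → degv δ < degv γ → gpoly K δ ∈ circId K v) :
    gpoly K γ ∈ circId K v := by
  obtain ⟨f, ⟨c, d, hfeq, hfI, hc1, hcsupp, ⟨k, hdk, hbk⟩⟩, hfspan⟩ := hconn α hcirc hunb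
  have hfC : binom K c d ∈ circId K v := hfeq ▸ sqfree_span_le_circId hfspan
  have hrel : (∑ i, c i • v i) = (∑ i, d i • v i) := rel_of_binom_mem (hfeq ▸ hfI)
  have hcle : ∀ i, c i ≤ posExp γ i := by
    intro i
    by_cases h : c i = 0
    · rw [h]; exact Nat.zero_le _
    · have h2 := hcsupp i h
      have h3 : 0 < α i := by simp only [posExp] at h2; omega
      have h4 := (hconf i).1 h3
      have h5 : 1 ≤ posExp γ i := by simp only [posExp]; omega
      have h6 := hc1 i
      omega
  have hγk : 1 ≤ negExp γ k := by
    have h3 : α k < 0 := by simp only [negExp] at hbk; omega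
    have h4 := (hconf k).2 h3
    simp only [negExp]; omega
  exact red hhom hγ c d hrel hfC hcle k (Nat.pos_of_ne_zero hdk) hγk IH

lemma Qker_lin {β₁ β₂ : Fin q → ℚ} (h₁ : Qker v β₁) (h₂ : Qker v β₂) (s t : ℚ) :
    Qker v (fun i => s * β₁ i - t * β₂ i) := by
  refine Qker_of_forall fun l => ?_
  have e : ∀ i ∈ Finset.univ, (s * β₁ i - t * β₂ i) * (v i l : ℚ)
      = s * (β₁ i * v i l) - t * (β₂ i * (v i l : ℚ)) := fun i _ => by ring
  rw [Finset.sum_congr rfl e, Finset.sum_sub_distrib, ← Finset.mul_sum, ← Finset.mul_sum,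
    Qker_apply h₁ l, Qker_apply h₂ l, mul_zero, mul_zero, sub_zero]

lemma balanced_contradiction {γ α : Fin q → ℤ}
    (hγ : kerVec v γ) (hcirc : IsCircuitVec v α)
    (hconf : ∀ i, (0 < α i → 0 < γ i) ∧ (α i < 0 → γ i < 0))
    {M : ℕ} (hM : 2 ≤ M) (j : Fin q) (hj : negExp α j = M)
    (hallP : ∀ i, 1 ≤ posExp γ i → (0 < α i ∧ posExp γ i ≤ 1))
    (hallN : ∀ i, 1 ≤ negExp γ i → (α i < 0 ∧ negExp γ i ≤ 1)) :
    False := by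
  obtain ⟨hαne, hαker, hmin, hgcd⟩ := hcirc
  obtain ⟨i₀, hi₀⟩ := Function.ne_iff.mp hαne
  have hi₀' : α i₀ ≠ 0 := by simpa using hi₀
  -- γ is supported inside α's support (and conversely), with entries ±1
  have hsuppγα : ∀ i, γ i ≠ 0 → α i ≠ 0 := by
    intro i hgi
    rcases lt_trichotomy (γ i) 0 with h | h | h
    · have h2 : 1 ≤ negExp γ i := by simp only [negExp]; omega
      have := (hallN i h2).1; omega
    · exact absurd h hgi
    · have h2 : 1 ≤ posExp γ i := by simp only [posExp]; omega
      have := (hallP i h2).1; omega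
  have hsuppαγ : ∀ i, α i ≠ 0 → γ i ≠ 0 := by
    intro i hai
    rcases lt_trichotomy (α i) 0 with h | h | h
    · have := (hconf i).2 h; omega
    · exact absurd h hai
    · have := (hconf i).1 h; omega
  have habs1 : ∀ i, γ i ≠ 0 → γ i = 1 ∨ γ i = -1 := by
    intro i hgi
    rcases lt_trichotomy (γ i) 0 with h | h | h
    · have h2 : 1 ≤ negExp γ i := by simp only [negExp]; omega
      have := (hallN i h2).2; simp only [negExp] at this; omega
    · exact absurd h hgi
    · have h2 : 1 ≤ posExp γ i := by simp only [posExp]; omega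
      have := (hallP i h2).2; simp only [posExp] at this; omega
  -- the auxiliary kernel vector
  set β : Fin q → ℚ := fun i => (α i₀ : ℚ) * (γ i : ℚ) - (γ i₀ : ℚ) * (α i : ℚ) with hβ
  have hβker : Qker v β := Qker_lin (Qker_of_kerVec hγ) (Qker_of_kerVec hαker) _ _
  have hβi₀ : β i₀ = 0 := by show (α i₀ : ℚ) * (γ i₀ : ℚ) - (γ i₀ : ℚ) * (α i₀ : ℚ) = 0; ring
  have hβzero : β = 0 := by
    by_contra hβne
    have hsub : Function.support β ⊆ Function.support α := by
      intro i hi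
      simp only [Function.mem_support] at hi ⊢
      intro hαi
      apply hi
      have hγi : γ i = 0 := by
        by_contra hγi
        exact (hsuppγα i hγi) hαi
      show (α i₀ : ℚ) * (γ i : ℚ) - (γ i₀ : ℚ) * (α i : ℚ) = 0
      rw [hγi, hαi]
      simp
    have := hmin β hβker hβne hsub
    have hi₀mem : i₀ ∈ Function.support α := Function.mem_support.mpr hi₀'
    rw [← this] at hi₀mem
    exact Function.mem_support.mp hi₀mem hβi₀
  have hprop : ∀ i, α i₀ * γ i = γ i₀ * α i := by
    intro i
    have h := congrFun hβzero i
    have h2 : (α i₀ : ℚ) * (γ i : ℚ) - (γ i₀ : ℚ) * (α i : ℚ) = 0 := h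
    have h3 : ((α i₀ * γ i : ℤ) : ℚ) = ((γ i₀ * α i : ℤ) : ℚ) := by push_cast; linarith
    exact_mod_cast h3
  -- all nonzero entries of α have the same absolute value
  have hγi₀ : γ i₀ = 1 ∨ γ i₀ = -1 := habs1 i₀ (hsuppαγ i₀ hi₀')
  have heqs : ∀ i, α i = 0 ∨ α i = α i₀ ∨ α i = -α i₀ := by
    intro i
    by_cases hαi : α i = 0
    · exact Or.inl hαi
    · have hγi : γ i = 1 ∨ γ i = -1 := habs1 i (hsuppαγ i hαi)
      have h := hprop i
      right
      rcases hγi with h1 | h1 <;> rcases hγi₀ with h2 | h2 <;> rw [h1, h2] at h <;>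
        simp only [mul_one, one_mul, mul_neg_one, neg_one_mul] at h <;> omega
  have hdvd : ∀ i ∈ Finset.univ, α i₀ ∣ α i := by
    intro i _
    rcases heqs i with h | h | h
    · rw [h]; exact dvd_zero _
    · rw [h]
    · rw [h]; exact dvd_neg.mpr dvd_rfl
  have hdvd1 : α i₀ ∣ 1 := hgcd ▸ Finset.dvd_gcd hdvd
  have hunit := Int.isUnit_iff.mp (isUnit_of_dvd_one hdvd1)
  have hj2 : α j ≤ -2 := by simp only [negExp] at hj; omega
  rcases heqs j with h | h | h <;> rcases hunit with h2 | h2 <;> omega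

end MainInduction
section TheInduction

open MvPolynomial

variable {K : Type*} [Field K] {n q : ℕ} {v : Fin q → Fin n → ℤ}

lemma gpoly_mem_circId (hq : 0 < q) (hhom : IsHomogeneousConfig v)
    (hnorm : IsNormalConfig v) (hconn : ConnectorCondition K v) :
    ∀ (D : ℕ) (γ : Fin q → ℤ), kerVec v γ → degv γ ≤ D → gpoly K γ ∈ circId K v := by
  have huniv : (Finset.univ : Finset (Fin q)).Nonempty := ⟨⟨0, hq⟩, Finset.mem_univ _⟩
  intro D
  induction D with
  | zero =>
    intro γ hker hdeg
    have h0 : γ = 0 := (degv_zero_iff hhom hker).mp (Nat.le_zero.mp hdeg)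
    rw [h0, gpoly_zero]
    exact Ideal.zero_mem _
  | succ D ih =>
    intro γ hker hdeg
    by_cases h0 : γ = 0
    · rw [h0, gpoly_zero]; exact Ideal.zero_mem _
    have IH : ∀ δ : Fin q → ℤ, kerVec v δ → degv δ < degv γ → gpoly K δ ∈ circId K v :=
      fun δ hkδ hlt => ih δ hkδ (by omega)
    obtain ⟨α, hcirc, hconf⟩ := exists_conformal_circuit_int γ hker h0
    have hαker : kerVec v α := hcirc.2.1
    have hαne : α ≠ 0 := hcirc.1
    have hkerneg : kerVec v (-γ) := kerVec_neg hker
    have hdegneg : degv (-γ) = degv γ := degv_neg hhom hker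
    have IHneg : ∀ δ : Fin q → ℤ, kerVec v δ → degv δ < degv (-γ) →
        gpoly K δ ∈ circId K v := by
      rw [hdegneg]; exact IH
    have hcircneg : IsCircuitVec v (-α) := neg_circuit hcirc
    have hconfneg : ∀ i, (0 < (-α) i → 0 < (-γ) i) ∧ ((-α) i < 0 → (-γ) i < 0) := by
      intro i
      simp only [Pi.neg_apply]
      constructor
      · intro h
        have := (hconf i).2 (by omega)
        omega
      · intro h
        have := (hconf i).1 (by omega)
        omega
    have finish_neg : gpoly K (-γ) ∈ circId K v → gpoly K γ ∈ circId K v := by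
      intro h
      rw [gpoly_neg] at h
      simpa using (circId K v).neg_mem h
    by_cases hc1 : ∀ i, posExp α i ≤ posExp γ i
    · have hrel := relation_of_kerVec hαker
      have hCα : binom K (posExp α) (negExp α) ∈ circId K v :=
        Ideal.subset_span ⟨α, hcirc, rfl⟩
      obtain ⟨k, hk⟩ := exists_neg_entry hhom hαker hαne
      have hγk : 1 ≤ negExp γ k := by
        have h3 : α k < 0 := by simp only [negExp] at hk; omega
        have h4 := (hconf k).2 h3
        simp only [negExp]; omega
      exact red hhom hker (posExp α) (negExp α) hrel hCα hc1 k hk hγk IH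
    · by_cases hc2 : ∀ i, negExp α i ≤ negExp γ i
      · apply finish_neg
        have hrel := relation_of_kerVec (kerVec_neg hαker)
        have hCα : binom K (posExp (-α)) (negExp (-α)) ∈ circId K v :=
          Ideal.subset_span ⟨-α, hcircneg, rfl⟩
        obtain ⟨k, hk⟩ := exists_neg_entry hhom (kerVec_neg hαker) (by simpa using hαne)
        have hγk : 1 ≤ negExp (-γ) k := by
          have h3 : (-α) k < 0 := by simp only [negExp] at hk; omega
          have h4 := (hconfneg k).2 h3
          simp only [negExp]; omega
        have hcle : ∀ i, posExp (-α) i ≤ posExp (-γ) i := by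
          intro i
          rw [posExp_neg, posExp_neg]
          exact hc2 i
        exact red hhom hkerneg (posExp (-α)) (negExp (-α)) hrel hCα hcle k hk hγk IHneg
      · push_neg at hc1 hc2
        obtain ⟨i1, hi1⟩ := hc1
        obtain ⟨i2, hi2⟩ := hc2
        set Mp := Finset.univ.sup (posExp α) with hMp
        set Mn := Finset.univ.sup (negExp α) with hMn
        have hsupPle : ∀ i, posExp α i ≤ Mp := fun i => Finset.le_sup (Finset.mem_univ i)
        have hsupNle : ∀ i, negExp α i ≤ Mn := fun i => Finset.le_sup (Finset.mem_univ i)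
        have hMp2 : 2 ≤ posExp α i1 := by
          have h1 : 0 < α i1 := by simp only [posExp] at hi1 ⊢; omega
          have h2 := (hconf i1).1 h1
          simp only [posExp] at hi1 ⊢
          omega
        have hMn2 : 2 ≤ negExp α i2 := by
          have h1 : α i2 < 0 := by simp only [negExp] at hi2 ⊢; omega
          have h2 := (hconf i2).2 h1
          simp only [negExp] at hi2 ⊢
          omega
        rcases lt_trichotomy Mp Mn with hlt | heq | hgt
        · exact connectorStep hhom hconn hker hcirc hconf hlt IH
        · have hM2 : 2 ≤ Mn := le_trans hMn2 (hsupNle i2)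
          have hM2' : 2 ≤ Mp := by omega
          obtain ⟨j, _, hj⟩ := Finset.exists_mem_eq_sup Finset.univ huniv (negExp α)
          obtain ⟨j', _, hj'⟩ := Finset.exists_mem_eq_sup Finset.univ huniv (posExp α)
          by_cases hH1 : ∃ k, (1 ≤ posExp γ k ∧ (α k ≤ 0 ∨ 2 ≤ posExp γ k))
          · obtain ⟨k, hk1, hk2⟩ := hH1
            exact moveA hhom hnorm hker hαker hconf hM2 hsupNle
              (fun i => by rw [← heq]; exact hsupPle i) j hj.symm k hk1 hk2 IH
          · by_cases hH2 : ∃ k, (1 ≤ negExp γ k ∧ (0 ≤ α k ∨ 2 ≤ negExp γ k))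
            · obtain ⟨k, hk1, hk2⟩ := hH2
              apply finish_neg
              refine moveA hhom hnorm hkerneg (kerVec_neg hαker) hconfneg hM2'
                (fun i => by rw [negExp_neg]; exact hsupPle i)
                (fun i => by rw [posExp_neg, heq]; exact hsupNle i)
                j' (by rw [negExp_neg]; exact hj'.symm)
                k (by rw [posExp_neg]; exact hk1) ?_ IHneg
              rcases hk2 with h | h
              · left
                simp only [Pi.neg_apply]
                omega
              · right
                rw [posExp_neg]
                exact h
            · exfalso
              push_neg at hH1 hH2
              refine balanced_contradiction hker hcirc hconf hM2 j hj.symm ?_ ?_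
              · intro i hi
                have h := hH1 i hi
                exact ⟨h.1, by omega⟩
              · intro i hi
                have h := hH2 i hi
                exact ⟨by omega, by omega⟩
        · apply finish_neg
          refine connectorStep hhom hconn hkerneg hcircneg hconfneg ?_ IHneg
          rw [posExp_neg, negExp_neg]
          exact hgt

end TheInduction
section FinalAssembly

open MvPolynomial

variable {K : Type*} [Field K] {n q : ℕ} {v : Fin q → Fin n → ℤ}

lemma circId_eq_toricIdeal (hq : 0 < q) (hhom : IsHomogeneousConfig v)
    (hnorm : IsNormalConfig v) (hconn : ConnectorCondition K v) :
    circId K v = toricIdeal K v := by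
  apply le_antisymm
  · rw [circId, Ideal.span_le]
    rintro f ⟨α, hcirc, rfl⟩
    exact gpoly_mem_toricIdeal hcirc.2.1
  · rw [toricIdeal, Ideal.span_le]
    rintro f ⟨a, b, hrel, rfl⟩
    have hker : kerVec v (fun i => (a i : ℤ) - b i) := kerVec_of_relation hrel
    have hfac := factor_binom (K := K) a b
    simp only [SetLike.mem_coe]
    rw [hfac]
    exact Ideal.mul_mem_left _ _
      (gpoly_mem_circId hq hhom hnorm hconn (degv _) _ hker le_rfl)

end FinalAssembly
/-- If every unbalanced circuit of the toric ideal of a homogeneous normal configuration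
has a connector which is a `K[T]`-linear combination of circuits with a square-free term,
then the toric ideal is generated by a finite set of circuits. -/
theorem connectorCondition_imp_genByCircuits (K : Type*) [Field K] {n q : ℕ}
    (hn : 0 < n) (hq : 0 < q) (v : Fin q → Fin n → ℤ)
    (hhom : IsHomogeneousConfig v) (hnorm : IsNormalConfig v)
    (h : ConnectorCondition K v) : GenByCircuits K v := by
  classical
  have hEq := circId_eq_toricIdeal (K := K) hq hhom hnorm h
  have hfg : (toricIdeal K v).FG :=
    (isNoetherianRing_iff_ideal_fg _).mp inferInstance _
  obtain ⟨G, hG⟩ := hfg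
  have hmem : ∀ g ∈ G, ∃ t : Finset (MvPolynomial (Fin q) K),
      ↑t ⊆ {f | IsCircuitPoly K v f} ∧ g ∈ Ideal.span (t : Set (MvPolynomial (Fin q) K)) := by
    intro g hg
    have h1 : g ∈ toricIdeal K v := by rw [← hG]; exact Ideal.subset_span hg
    rw [← hEq] at h1
    exact Submodule.mem_span_finite_of_mem_span h1
  choose t ht1 ht2 using hmem
  refine ⟨G.attach.biUnion (fun g => t g.1 g.2), ?_, ?_⟩
  · intro f hf
    rw [Finset.mem_biUnion] at hf
    obtain ⟨g, _, hfg2⟩ := hf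
    exact ht1 g.1 g.2 hfg2
  · apply le_antisymm
    · rw [Ideal.span_le]
      intro f hf
      rw [Finset.coe_biUnion] at hf
      simp only [Set.mem_iUnion, Finset.mem_coe] at hf
      obtain ⟨g, _, hfg2⟩ := hf
      have hcp : IsCircuitPoly K v f := ht1 g.1 g.2 hfg2
      rw [← hEq]
      exact Ideal.subset_span hcp
    · rw [← hG, Ideal.span_le]
      intro g hg
      have hg' : g ∈ G := hg
      have h2 := ht2 g hg'
      simp only [SetLike.mem_coe]
      refine Ideal.span_mono ?_ h2
      intro x hx
      rw [Finset.coe_biUnion]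
      simp only [Set.mem_iUnion, Finset.mem_coe]
      exact ⟨⟨g, hg'⟩, Finset.mem_attach _ _, hx⟩
end
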